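/- arXiv:1209.3954 — 4 statements merged into one kernel-verified Lean document; each statement's English description precedes it below -/
import Mathlib

section
/- For every δ ∈ (0, 2π/3] and every ρ ≥ 1 there exists a constant C = C(δ, ρ) > 0 such that for every δ-fat mesh M all of whose edges have length in the interval [1, ρ], and every line segment s of length d ≥ 0 in ℝ², the number of triangles of M that intersect s is at most C · (d + 1). -/
open scoped RealInnerProductSpace
open EuclideanGeometry

noncomputable section

/-- The Euclidean plane. -/
abbrev Pt : Type := EuclideanSpace ℝ (Fin 2)

/-- A (possibly degenerate) triangle, given by its three corners. -/
structure Tri where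
  a : Pt
  b : Pt
  c : Pt

/-- The vertex set of a triangle. -/
def Tri.verts (T : Tri) : Set Pt := {T.a, T.b, T.c}

/-- The closed triangle (as a region of the plane). -/
def Tri.carrier (T : Tri) : Set Pt := convexHull ℝ T.verts

/-- The three edges of a triangle, each as a closed segment. -/
def Tri.edgeSegs (T : Tri) : Set (Set Pt) :=
  {segment ℝ T.a T.b, segment ℝ T.b T.c, segment ℝ T.a T.c}

/-- Nondegeneracy: the three corners are not collinear. -/
def Tri.Nondeg (T : Tri) : Prop := ¬ Collinear ℝ T.verts

/-- A mesh: a finite nonempty set of nondegenerate triangles in the plane such that any two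
distinct triangles have disjoint interiors and intersect in either the empty set, a common
vertex, or a complete common edge. -/
structure Mesh where
  tris : Set Tri
  finite : tris.Finite
  nonempty : tris.Nonempty
  nondeg : ∀ T ∈ tris, T.Nondeg
  proper : ∀ T ∈ tris, ∀ T' ∈ tris, T ≠ T' →
    interior T.carrier ∩ interior T'.carrier = ∅ ∧
    (T.carrier ∩ T'.carrier = ∅ ∨
      (∃ v ∈ T.verts ∩ T'.verts, T.carrier ∩ T'.carrier = {v}) ∨
      (∃ e ∈ T.edgeSegs ∩ T'.edgeSegs, T.carrier ∩ T'.carrier = e))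

/-- The vertices of a mesh. -/
def Mesh.verts (M : Mesh) : Set Pt := ⋃ T ∈ M.tris, T.verts

/-- The edges of a mesh, as unordered pairs of vertices. -/
def Mesh.edges (M : Mesh) : Set (Sym2 Pt) :=
  ⋃ T ∈ M.tris, ({s(T.a, T.b), s(T.b, T.c), s(T.a, T.c)} : Set (Sym2 Pt))

/-- A triangle is `δ`-fat if each of its interior angles is at least `δ`. -/
def Tri.Fat (δ : ℝ) (T : Tri) : Prop :=
  δ ≤ ∠ T.b T.a T.c ∧ δ ≤ ∠ T.a T.b T.c ∧ δ ≤ ∠ T.a T.c T.b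

/-- A mesh is `δ`-fat if every angle of every triangle is at least `δ`. -/
def Mesh.Fat (δ : ℝ) (M : Mesh) : Prop := ∀ T ∈ M.tris, T.Fat δ

/-- A convex polygon respecting the mesh `M` (a "potato"): the union of a nonempty subset of
the triangles of `M` which is a convex set. -/
def Mesh.IsPotato (M : Mesh) (P : Set Pt) : Prop :=
  ∃ S, S ⊆ M.tris ∧ S.Nonempty ∧ P = ⋃ T ∈ S, T.carrier ∧ Convex ℝ P

/-- A convex outerplanar polygon respecting the mesh `M` (a "carrot"): a potato that contains
no vertex of `M` in its interior. -/
def Mesh.IsCarrot (M : Mesh) (P : Set Pt) : Prop :=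
  M.IsPotato P ∧ ∀ v ∈ M.verts, v ∉ interior P

/-- Every edge of the mesh has length in the interval `[1, ρ]` (compactness, normalized so
that the shortest edge has length at least `1`). -/
def Mesh.EdgesIn (M : Mesh) (ρ : ℝ) : Prop :=
  ∀ T ∈ M.tris, dist T.a T.b ∈ Set.Icc 1 ρ ∧ dist T.b T.c ∈ Set.Icc 1 ρ ∧
    dist T.a T.c ∈ Set.Icc 1 ρ


namespace Aux
open MeasureTheory Metric


def e0 : Pt := EuclideanSpace.single 0 1
def e1 : Pt := EuclideanSpace.single 1 1
def T0 : Set Pt := convexHull ℝ {(0 : Pt), e0, e1}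

def lmap (u v : Pt) : Pt →ₗ[ℝ] Pt where
  toFun x := x 0 • u + x 1 • v
  map_add' x y := by
    simp only [PiLp.add_apply, add_smul]; abel
  map_smul' c x := by
    simp only [PiLp.smul_apply, smul_eq_mul, mul_smul, RingHom.id_apply, smul_add]

def bE : Module.Basis (Fin 2) ℝ Pt := (EuclideanSpace.basisFun (Fin 2) ℝ).toBasis

lemma lmap_det (u v : Pt) : LinearMap.det (lmap u v) = u 0 * v 1 - v 0 * u 1 := by
  rw [← LinearMap.det_toMatrix bE, Matrix.det_fin_two]
  simp [LinearMap.toMatrix_apply, bE, OrthonormalBasis.coe_toBasis_repr_apply,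
    EuclideanSpace.basisFun_repr, lmap, EuclideanSpace.basisFun_apply,
    EuclideanSpace.single_apply]

lemma lmap_e0 (u v : Pt) : lmap u v e0 = u := by
  simp [lmap, e0, EuclideanSpace.single_apply]

lemma lmap_e1 (u v : Pt) : lmap u v e1 = v := by
  simp [lmap, e1, EuclideanSpace.single_apply]

lemma volume_tri (a b c : Pt) :
    volume (convexHull ℝ ({a, b, c} : Set Pt)) =
      ENNReal.ofReal |(b - a) 0 * (c - a) 1 - (c - a) 0 * (b - a) 1| * volume T0 := by
  set u := b - a with hu
  set v := c - a with hv
  set L := lmap u v with hL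
  have himg : (fun z => a + z) '' (L '' T0) = convexHull ℝ ({a, b, c} : Set Pt) := by
    rw [T0, L.image_convexHull]
    have h1 : L '' {(0 : Pt), e0, e1} = {0, u, v} := by
      simp only [Set.image_insert_eq, Set.image_singleton, map_zero, hL, lmap_e0, lmap_e1]
    rw [h1]
    have h2 := (AffineEquiv.constVAdd ℝ Pt a).toAffineMap.image_convexHull
      ({(0 : Pt), u, v} : Set Pt)
    have h3 : ⇑(AffineEquiv.constVAdd ℝ Pt a).toAffineMap = fun z => a + z := by
      funext z; rfl
    rw [h3] at h2
    rw [h2]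
    congr 1
    simp only [Set.image_insert_eq, Set.image_singleton]
    have : a + u = b := by rw [hu]; abel
    have h5 : a + v = c := by rw [hv]; abel
    simp [this, h5]
  rw [← himg, Set.image_add_left, measure_preimage_add,
    Measure.addHaar_image_linearMap, lmap_det]

lemma T0_pos : 0 < volume T0 := by
  apply MeasureTheory.Measure.measure_pos_of_nonempty_interior (μ := volume)
  unfold T0
  rw [interior_convexHull_nonempty_iff_affineSpan_eq_top]
  rw [eq_top_iff]
  intro x _
  set s := affineSpan ℝ ({(0 : Pt), e0, e1} : Set Pt) with hs
  have h0 : (0 : Pt) ∈ s := mem_affineSpan ℝ (by simp)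
  have he0 : e0 ∈ s := mem_affineSpan ℝ (by simp)
  have he1 : e1 ∈ s := mem_affineSpan ℝ (by simp)
  have hx0 : x 0 • ((e0 : Pt) -ᵥ 0) +ᵥ (0 : Pt) ∈ s :=
    AffineSubspace.smul_vsub_vadd_mem s (x 0) he0 h0 h0
  have hx1 : x 1 • ((e1 : Pt) -ᵥ 0) +ᵥ (x 0 • ((e0 : Pt) -ᵥ 0) +ᵥ (0 : Pt)) ∈ s :=
    AffineSubspace.smul_vsub_vadd_mem s (x 1) he1 h0 hx0
  have hxx : x 1 • ((e1 : Pt) -ᵥ 0) +ᵥ (x 0 • ((e0 : Pt) -ᵥ 0) +ᵥ (0 : Pt)) = x := by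
    ext i
    fin_cases i <;>
      simp [e0, e1, EuclideanSpace.single_apply, vsub_eq_sub, vadd_eq_add]
  rwa [hxx] at hx1

lemma T0_fin : volume T0 < ⊤ := by
  unfold T0
  apply IsCompact.measure_lt_top
  apply Set.Finite.isCompact_convexHull
  exact (Set.finite_singleton e1).insert e0 |>.insert 0


lemma sin_bound {d t : ℝ} (hd0 : 0 < d) (ht1 : d ≤ t) (ht2 : t ≤ Real.pi - d) :
    Real.sin d ≤ Real.sin t := by
  have hpi := Real.pi_pos
  have hdh : d ≤ Real.pi / 2 := by linarith
  rcases le_or_gt t (Real.pi / 2) with h | h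
  · apply Real.strictMonoOn_sin.monotoneOn ?_ ?_ ht1
    · exact Set.mem_Icc.mpr ⟨by linarith, hdh⟩
    · exact Set.mem_Icc.mpr ⟨by linarith, h⟩
  · nth_rewrite 2 [← Real.sin_pi_sub]
    apply Real.strictMonoOn_sin.monotoneOn ?_ ?_ (show d ≤ Real.pi - t by linarith)
    · exact Set.mem_Icc.mpr ⟨by linarith, hdh⟩
    · exact Set.mem_Icc.mpr ⟨by linarith, by linarith⟩

lemma tri_vol {δ : ℝ} (hδ0 : 0 < δ) (T : Tri) (hf : T.Fat δ)
    (hab : 1 ≤ dist T.a T.b) (hbc : 1 ≤ dist T.b T.c) (hac : 1 ≤ dist T.a T.c) :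
    ENNReal.ofReal (Real.sin δ) * volume T0 ≤ volume T.carrier := by
  have hpi := Real.pi_pos
  have hba : T.b ≠ T.a := fun h => by rw [h, dist_self] at hab; linarith
  have hca : T.c ≠ T.a := fun h => by
    rw [h] at hac; rw [dist_comm, dist_self] at hac; linarith
  set u : Pt := T.b - T.a with hu
  set v : Pt := T.c - T.a with hv
  have hvol : volume T.carrier = ENNReal.ofReal |u 0 * v 1 - v 0 * u 1| * volume T0 := by
    rw [Tri.carrier, Tri.verts]; exact volume_tri T.a T.b T.c
  rw [hvol]
  have hnu : 1 ≤ ‖u‖ := by rw [hu, ← dist_eq_norm, dist_comm]; exact hab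
  have hnv : 1 ≤ ‖v‖ := by rw [hv, ← dist_eq_norm, dist_comm]; exact hac
  set θ := InnerProductGeometry.angle u v with hθ
  have hθdef : ∠ T.b T.a T.c = θ := by
    rw [EuclideanGeometry.angle, hθ, hu, hv, vsub_eq_sub, vsub_eq_sub]
  have hθδ : δ ≤ θ := by rw [← hθdef]; exact hf.1
  have hsum := EuclideanGeometry.angle_add_angle_add_angle_eq_pi T.c hba
  have hcomm1 : ∠ T.b T.c T.a = ∠ T.a T.c T.b := EuclideanGeometry.angle_comm _ _ _
  have hcomm2 : ∠ T.c T.a T.b = ∠ T.b T.a T.c := EuclideanGeometry.angle_comm _ _ _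
  have hθub : θ ≤ Real.pi - δ := by
    have h1 := hf.2.1
    have h2 := hf.2.2
    rw [hcomm1, hcomm2, hθdef] at hsum
    linarith
  have hsinθ := sin_bound hδ0 hθδ hθub
  have hsin := InnerProductGeometry.sin_angle_mul_norm_mul_norm u v
  have huu : ⟪u, u⟫ = u 0 * u 0 + u 1 * u 1 := by
    simp only [PiLp.inner_apply, RCLike.inner_apply, Fin.sum_univ_two, conj_trivial]
  have hvv : ⟪v, v⟫ = v 0 * v 0 + v 1 * v 1 := by
    simp only [PiLp.inner_apply, RCLike.inner_apply, Fin.sum_univ_two, conj_trivial]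
  have huv : ⟪u, v⟫ = u 0 * v 0 + u 1 * v 1 := by
    simp only [PiLp.inner_apply, RCLike.inner_apply, Fin.sum_univ_two, conj_trivial]; ring
  have habs : |u 0 * v 1 - v 0 * u 1| = Real.sin θ * (‖u‖ * ‖v‖) := by
    rw [← hθ] at hsin
    rw [hsin, huu, hvv, huv, ← Real.sqrt_sq_eq_abs]
    congr 1; ring
  have hsinδ : 0 < Real.sin δ := Real.sin_pos_of_pos_of_lt_pi hδ0 (by linarith)
  have hkey : Real.sin δ ≤ |u 0 * v 1 - v 0 * u 1| := by
    rw [habs]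
    have h1 : (1 : ℝ) ≤ ‖u‖ * ‖v‖ := by nlinarith
    have h2 : 0 ≤ Real.sin θ * (‖u‖ * ‖v‖ - 1) :=
      mul_nonneg (le_trans hsinδ.le hsinθ) (by linarith)
    nlinarith
  exact mul_le_mul_left (ENNReal.ofReal_le_ofReal hkey) _

end Aux

/-- For every `δ ∈ (0, 2π/3]` and `ρ ≥ 1` there is `C > 0` such that in any
`δ`-fat mesh with all edge lengths in `[1, ρ]`, any segment of length `d` intersects at most
`C · (d + 1)` triangles of the mesh. -/
theorem segment_intersects_few_triangles (δ : ℝ) (hδ : δ ∈ Set.Ioc 0 (2 * Real.pi / 3))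
    (ρ : ℝ) (hρ : 1 ≤ ρ) :
    ∃ C : ℝ, 0 < C ∧ ∀ M : Mesh, M.Fat δ → M.EdgesIn ρ → ∀ x y : Pt,
      ({T ∈ M.tris | (T.carrier ∩ segment ℝ x y).Nonempty}.ncard : ℝ) ≤
        C * (dist x y + 1) := by
  classical
  open MeasureTheory Metric in
  obtain ⟨hδ0, hδπ⟩ := hδ
  have hpi := Real.pi_pos
  have hsinδ : 0 < Real.sin δ := Real.sin_pos_of_pos_of_lt_pi hδ0 (by linarith)
  set c : ENNReal := ENNReal.ofReal (Real.sin δ) * MeasureTheory.volume Aux.T0 with hc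
  set cr : ℝ := c.toReal with hcrdef
  have hcfin : c ≠ ⊤ := ENNReal.mul_ne_top ENNReal.ofReal_ne_top Aux.T0_fin.ne
  have hcrpos : 0 < cr := by
    rw [hcrdef, hc, ENNReal.toReal_mul, ENNReal.toReal_ofReal hsinδ.le]
    exact mul_pos hsinδ (ENNReal.toReal_pos Aux.T0_pos.ne' Aux.T0_fin.ne)
  set Br : ℝ := (MeasureTheory.volume (Metric.closedBall (0 : Pt) (ρ + 1))).toReal with hBr
  have hBrpos : 0 < Br := ENNReal.toReal_pos
    (Metric.measure_closedBall_pos MeasureTheory.volume _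
      (by linarith : (0:ℝ) < ρ + 1)).ne'
    MeasureTheory.measure_closedBall_lt_top.ne
  refine ⟨3 * Br / cr, by positivity, ?_⟩
  intro M hfat hedge x y
  set d := dist x y with hd
  have hd0 : 0 ≤ d := dist_nonneg
  set n : ℕ := ⌈d⌉₊ + 1 with hn
  have hnpos : (0 : ℝ) < n := by positivity
  have hdn : d ≤ n := by
    calc d ≤ (⌈d⌉₊ : ℝ) := Nat.le_ceil d
    _ ≤ n := by rw [hn]; push_cast; linarith
  set z : ℕ → Pt := fun i => x + ((i : ℝ)/n) • (y - x) with hz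
  set S := {T ∈ M.tris | (T.carrier ∩ segment ℝ x y).Nonempty} with hS
  have hSfin : S.Finite := M.finite.subset (Set.sep_subset _ _)
  set F := hSfin.toFinset with hF
  have hScard : S.ncard = F.card := Set.ncard_eq_toFinset_card _ hSfin
  -- covering
  have hcover : ∀ T ∈ F, T.carrier ⊆
      ⋃ i ∈ Finset.range (n+1), Metric.closedBall (z i) (ρ + 1) := by
    intro T hT
    rw [hF, Set.Finite.mem_toFinset] at hT
    obtain ⟨hTM, p, hpT, hps⟩ := hT
    -- all of T.carrier is within ρ of p
    have hdiam : ∀ q ∈ T.carrier, dist q p ≤ ρ := by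
      intro q hq
      have hbdd : Bornology.IsBounded T.carrier := by
        have : T.verts.Finite := by
          rw [Tri.verts]
          exact (Set.finite_singleton T.c).insert T.b |>.insert T.a
        exact (this.isCompact_convexHull ℝ).isBounded
      obtain ⟨⟨eab1, eab2⟩, ⟨ebc1, ebc2⟩, ⟨eac1, eac2⟩⟩ := hedge T hTM
      calc dist q p ≤ Metric.diam T.carrier := Metric.dist_le_diam_of_mem hbdd hq hpT
      _ = Metric.diam T.verts := by rw [Tri.carrier, convexHull_diam]
      _ ≤ ρ := by
        apply Metric.diam_le_of_forall_dist_le (by linarith)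
        intro w hw w' hw'
        simp only [Tri.verts, Set.mem_insert_iff, Set.mem_singleton_iff] at hw hw'
        rcases hw with rfl | rfl | rfl <;> rcases hw' with rfl | rfl | rfl
        all_goals first
          | (rw [dist_self]; linarith)
          | linarith
          | (rw [dist_comm]; linarith)
    -- find the grid point
    rw [segment_eq_image'] at hps
    obtain ⟨t, ⟨ht0, ht1⟩, rfl⟩ := hps
    set i : ℕ := ⌊t * n⌋₊ with hi
    have hin : i ≤ n := by
      have h1 : t * n ≤ (n : ℝ) := by nlinarith
      calc i ≤ ⌊(n : ℝ)⌋₊ := Nat.floor_le_floor h1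
      _ = n := Nat.floor_natCast n
    have hfl1 : (i : ℝ) ≤ t * n := Nat.floor_le (by positivity)
    have hfl2 : t * n - 1 < (i : ℝ) := Nat.sub_one_lt_floor _
    have hdpz : dist (x + t • (y - x)) (z i) ≤ 1 := by
      rw [hz, dist_eq_norm]
      have heq : (x + t • (y - x)) - (x + ((i : ℝ)/n) • (y - x))
          = (t - (i : ℝ)/n) • (y - x) := by
        rw [sub_smul]; abel
      rw [heq, norm_smul, Real.norm_eq_abs]
      have habs : |t - (i : ℝ)/n| ≤ 1/n := by
        have heq2 : t - (i : ℝ)/n = (t * n - i)/n := by field_simp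
        rw [heq2, abs_div, abs_of_pos hnpos]
        gcongr
        rw [abs_le]
        constructor <;> linarith
      have hyx : ‖y - x‖ = d := by rw [hd, dist_comm, dist_eq_norm]
      rw [hyx]
      calc |t - (i : ℝ)/n| * d ≤ (1/n) * d := mul_le_mul_of_nonneg_right habs hd0
      _ ≤ 1 := by rw [div_mul_eq_mul_div, one_mul, div_le_one hnpos]; exact hdn
    intro q hq
    refine Set.mem_biUnion (Finset.mem_range.2 (Nat.lt_succ_of_le hin)) ?_
    rw [Metric.mem_closedBall]
    calc dist q (z i) ≤ dist q (x + t • (y - x)) + dist (x + t • (y - x)) (z i) :=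
      dist_triangle _ _ _
    _ ≤ ρ + 1 := add_le_add (hdiam q hq) hdpz
  -- counting via volume
  have perT : ∀ T ∈ F, c ≤ MeasureTheory.volume (interior T.carrier) := by
    intro T hT
    rw [hF, Set.Finite.mem_toFinset] at hT
    obtain ⟨hTM, -⟩ := hT
    obtain ⟨⟨eab1, eab2⟩, ⟨ebc1, ebc2⟩, ⟨eac1, eac2⟩⟩ := hedge T hTM
    have h1 : c ≤ MeasureTheory.volume T.carrier :=
      Aux.tri_vol hδ0 T (hfat T hTM) eab1 ebc1 eac1
    have hconv : Convex ℝ T.carrier := convex_convexHull ℝ _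
    have hsub : T.carrier ⊆ interior T.carrier ∪ frontier T.carrier := by
      intro w hw
      by_cases hwi : w ∈ interior T.carrier
      · exact Or.inl hwi
      · exact Or.inr ⟨subset_closure hw, hwi⟩
    have h2 : MeasureTheory.volume T.carrier ≤ MeasureTheory.volume (interior T.carrier) := by
      calc MeasureTheory.volume T.carrier
          ≤ MeasureTheory.volume (interior T.carrier) +
            MeasureTheory.volume (frontier T.carrier) :=
        (MeasureTheory.measure_mono hsub).trans (MeasureTheory.measure_union_le _ _)
      _ = MeasureTheory.volume (interior T.carrier) := by
        rw [hconv.addHaar_frontier MeasureTheory.volume, add_zero]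
    exact h1.trans h2
  have hdisj : (↑F : Set Tri).PairwiseDisjoint fun T => interior T.carrier := by
    intro T hT T' hT' hne
    rw [hF, Set.Finite.coe_toFinset] at hT hT'
    exact Set.disjoint_iff_inter_eq_empty.2 (M.proper T hT.1 T' hT'.1 hne).1
  have key : (F.card : ENNReal) * c ≤
      ((n + 1 : ℕ) : ENNReal) * MeasureTheory.volume (Metric.closedBall (0 : Pt) (ρ + 1)) := by
    calc (F.card : ENNReal) * c = ∑ _T ∈ F, c := by
          rw [Finset.sum_const, nsmul_eq_mul]
    _ ≤ ∑ T ∈ F, MeasureTheory.volume (interior T.carrier) := Finset.sum_le_sum perT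
    _ = MeasureTheory.volume (⋃ T ∈ F, interior T.carrier) :=
      (MeasureTheory.measure_biUnion_finset hdisj
        (fun T _ => isOpen_interior.measurableSet)).symm
    _ ≤ MeasureTheory.volume (⋃ i ∈ Finset.range (n+1), Metric.closedBall (z i) (ρ + 1)) := by
      apply MeasureTheory.measure_mono
      apply Set.iUnion₂_subset
      intro T hT
      exact interior_subset.trans (hcover T hT)
    _ ≤ ∑ i ∈ Finset.range (n+1), MeasureTheory.volume (Metric.closedBall (z i) (ρ + 1)) :=
      MeasureTheory.measure_biUnion_finset_le _ _
    _ = ((n + 1 : ℕ) : ENNReal) * MeasureTheory.volume (Metric.closedBall (0 : Pt) (ρ + 1)) := by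
      have : ∀ i, MeasureTheory.volume (Metric.closedBall (z i) (ρ + 1)) =
          MeasureTheory.volume (Metric.closedBall (0 : Pt) (ρ + 1)) := fun i =>
        MeasureTheory.Measure.addHaar_closedBall_center _ _ _
      rw [Finset.sum_congr rfl (fun i _ => this i), Finset.sum_const, Finset.card_range,
        nsmul_eq_mul]
  have hfinR : ((n + 1 : ℕ) : ENNReal) *
      MeasureTheory.volume (Metric.closedBall (0 : Pt) (ρ + 1)) ≠ ⊤ :=
    ENNReal.mul_ne_top (ENNReal.natCast_ne_top _) MeasureTheory.measure_closedBall_lt_top.ne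
  have hreal := ENNReal.toReal_mono hfinR key
  simp only [ENNReal.toReal_mul, ENNReal.toReal_natCast] at hreal
  -- final arithmetic
  rw [hScard]
  have hceil : (⌈d⌉₊ : ℝ) < d + 1 := Nat.ceil_lt_add_one hd0
  have hn3 : ((n : ℝ) + 1) ≤ 3 * (d + 1) := by
    rw [hn]; push_cast; linarith
  have hstep1 : (F.card : ℝ) ≤ ((n : ℝ) + 1) * Br / cr := by
    rw [le_div_iff₀ hcrpos]
    calc (F.card : ℝ) * cr ≤ ((n + 1 : ℕ) : ℝ) * Br := hreal
    _ = ((n : ℝ) + 1) * Br := by push_cast; ring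
  calc (F.card : ℝ) ≤ ((n : ℝ) + 1) * Br / cr := hstep1
  _ ≤ 3 * (d + 1) * Br / cr := by gcongr
  _ = 3 * Br / cr * (d + 1) := by ring
end
end

section
/- For every δ ∈ (0, 2π/3], ρ ≥ 1 and γ ≥ 1 there exists a constant D = D(δ, ρ, γ) > 0 such that for every δ-fat mesh M all of whose edges have length in [1, ρ], every γ-fat convex outerplanar polygon (carrot) respecting M has diameter at most D. -/
open scoped RealInnerProductSpace
open EuclideanGeometry

noncomputable section

/-- A set `P` is `γ`-fat if the radius of some closed disk containing `P` (hence of the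
smallest such disk) is at most `γ` times the radius of some closed disk contained in `P`. -/
def GammaFat (γ : ℝ) (P : Set Pt) : Prop :=
  ∃ c₁ r₁ c₂ r₂ : _, P ⊆ Metric.closedBall c₁ r₁ ∧ Metric.closedBall c₂ r₂ ⊆ P ∧
    0 ≤ r₂ ∧ r₁ ≤ γ * r₂

/-- For every `δ ∈ (0, 2π/3]`, `ρ ≥ 1` and `γ ≥ 1` there is `D > 0` such that
every `γ`-fat carrot respecting a `δ`-fat mesh with all edge lengths in `[1, ρ]` has diameter
at most `D`. -/
theorem fat_carrot_diameter_bound (δ : ℝ) (hδ : δ ∈ Set.Ioc 0 (2 * Real.pi / 3))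
    (ρ : ℝ) (hρ : 1 ≤ ρ) (γ : ℝ) (hγ : 1 ≤ γ) :
    ∃ D : ℝ, 0 < D ∧ ∀ M : Mesh, M.Fat δ → M.EdgesIn ρ →
      ∀ P : Set Pt, M.IsCarrot P → GammaFat γ P → Metric.diam P ≤ D := by
  refine ⟨2 * γ * ρ, by positivity, fun M _ hE P hC hG => ?_⟩
  obtain ⟨⟨S, hS, _, hP, _⟩, hvert⟩ := hC
  obtain ⟨c₁, r₁, c₂, r₂, hP1, hP2, hr₂, hr₁⟩ := hG
  -- the center of the inscribed ball lies in some triangle of S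
  have hc₂ : c₂ ∈ P := hP2 (Metric.mem_closedBall_self hr₂)
  rw [hP] at hc₂
  obtain ⟨T, hT, hcT⟩ := Set.mem_iUnion₂.mp hc₂
  -- the triangle is within distance ρ of its vertex a
  obtain ⟨hab, _, hac⟩ := hE T (hS hT)
  have hcar : T.carrier ⊆ Metric.closedBall T.a ρ := by
    apply convexHull_min _ (convex_closedBall _ _)
    rintro x (rfl | rfl | rfl)
    · simpa using le_trans zero_le_one hρ
    · simpa [Metric.mem_closedBall, dist_comm] using hab.2
    · simpa [Metric.mem_closedBall, dist_comm] using hac.2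
  have hdca : dist c₂ T.a ≤ ρ := by simpa [Metric.mem_closedBall] using hcar hcT
  -- the vertex a is not in the open inscribed ball
  have haV : T.a ∈ M.verts :=
    Set.mem_biUnion (hS hT) (by simp [Tri.verts])
  have hball : Metric.ball c₂ r₂ ⊆ interior P :=
    interior_maximal ((Metric.ball_subset_closedBall).trans hP2) Metric.isOpen_ball
  have hnot : T.a ∉ Metric.ball c₂ r₂ := fun h => hvert T.a haV (hball h)
  have hr₂ρ : r₂ ≤ ρ := by
    have := (Metric.mem_ball.not.mp hnot)
    push_neg at this
    calc r₂ ≤ dist T.a c₂ := this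
      _ = dist c₂ T.a := dist_comm _ _
      _ ≤ ρ := hdca
  -- conclude
  have hr₁' : r₁ ≤ γ * ρ := hr₁.trans (by nlinarith)
  rcases le_or_gt 0 r₁ with h0 | h0
  · calc Metric.diam P ≤ Metric.diam (Metric.closedBall c₁ r₁) :=
        Metric.diam_mono hP1 Metric.isBounded_closedBall
      _ ≤ 2 * r₁ := Metric.diam_closedBall h0
      _ ≤ 2 * γ * ρ := by nlinarith
  · have : P = ∅ := Set.subset_eq_empty hP1 (Metric.closedBall_eq_empty.mpr h0)
    simp [this]
    positivity
end
end

section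
/- For every δ ∈ (0, 2π/3], ρ ≥ 1 and γ ≥ 1 there exists a constant C = C(δ, ρ, γ) > 0 such that every δ-fat mesh M with n vertices all of whose edges have length in [1, ρ] has at most C · n distinct γ-fat convex outerplanar polygons (carrots) that respect M. -/
open scoped RealInnerProductSpace
open EuclideanGeometry

noncomputable section

namespace CarrotAux

open Metric MeasureTheory
open scoped Pointwise

noncomputable def e1 : Pt := EuclideanSpace.single 0 1
noncomputable def e2 : Pt := EuclideanSpace.single 1 1

lemma corner_not_collinear : ¬ Collinear ℝ ({0, e1, e2} : Set Pt) := by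
  intro h
  obtain ⟨v, hv⟩ := (collinear_iff_of_mem (show (0:Pt) ∈ ({0, e1, e2} : Set Pt) by simp)).mp h
  obtain ⟨r1, h1⟩ := hv e1 (by simp)
  obtain ⟨r2, h2⟩ := hv e2 (by simp)
  have h10 : (1:ℝ) = r1 * v 0 := by
    have := congrArg (· 0) h1
    simpa [e1, EuclideanSpace.single_apply] using this
  have h11 : (0:ℝ) = r1 * v 1 := by
    have := congrArg (· 1) h1
    simpa [e1, EuclideanSpace.single_apply] using this
  have h20 : (0:ℝ) = r2 * v 0 := by
    have := congrArg (· 0) h2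
    simpa [e2, EuclideanSpace.single_apply] using this
  have h21 : (1:ℝ) = r2 * v 1 := by
    have := congrArg (· 1) h2
    simpa [e2, EuclideanSpace.single_apply] using this
  nlinarith [h10, h11, h20, h21]

lemma affineSpan_top_of_not_collinear {p q r : Pt} (h : ¬ Collinear ℝ ({p,q,r} : Set Pt)) :
    affineSpan ℝ ({p,q,r} : Set Pt) = ⊤ := by
  have hai : AffineIndependent ℝ ![p,q,r] := affineIndependent_iff_not_collinear_set.mpr h
  have hc : Fintype.card (Fin 3) = Module.finrank ℝ Pt + 1 := by
    simp [finrank_euclideanSpace_fin]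
  have := hai.affineSpan_eq_top_iff_card_eq_finrank_add_one.mpr hc
  have hr : Set.range ![p,q,r] = ({p,q,r} : Set Pt) := by
    ext x
    simp [Fin.exists_fin_succ, Matrix.range_cons, Matrix.range_empty]
    tauto
  rwa [hr] at this

lemma volume_pos_of_not_collinear {p q r : Pt} (h : ¬ Collinear ℝ ({p,q,r} : Set Pt)) :
    0 < volume (convexHull ℝ ({p,q,r} : Set Pt)) := by
  have hspan := affineSpan_top_of_not_collinear h
  have hne : (interior (convexHull ℝ ({p,q,r} : Set Pt))).Nonempty :=
    interior_convexHull_nonempty_iff_affineSpan_eq_top.mpr hspan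
  calc (0:ENNReal) < volume (interior (convexHull ℝ ({p,q,r} : Set Pt))) :=
        isOpen_interior.measure_pos volume hne
    _ ≤ _ := measure_mono interior_subset

def corner : Set Pt := convexHull ℝ {0, e1, e2}

lemma corner_volume_pos : 0 < volume corner := volume_pos_of_not_collinear corner_not_collinear

lemma corner_volume_lt_top : volume corner < ⊤ := by
  have : IsCompact corner := (Set.toFinite _).isCompact_convexHull ℝ
  exact this.measure_lt_top



noncomputable def shear (u v : Pt) : Pt →ₗ[ℝ] Pt where
  toFun x := x 0 • u + x 1 • v
  map_add' x y := by
    simp only [PiLp.add_apply, add_smul]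
    abel
  map_smul' c x := by
    simp only [PiLp.smul_apply, smul_eq_mul, mul_smul, RingHom.id_apply, smul_add]

lemma shear_apply (u v x : Pt) : shear u v x = x 0 • u + x 1 • v := rfl

lemma shear_e1 (u v : Pt) : shear u v (EuclideanSpace.single 0 1) = u := by
  simp [shear_apply, EuclideanSpace.single_apply]

lemma shear_e2 (u v : Pt) : shear u v (EuclideanSpace.single 1 1) = v := by
  simp [shear_apply, EuclideanSpace.single_apply]

lemma shear_det (u v : Pt) : LinearMap.det (shear u v) = u 0 * v 1 - v 0 * u 1 := by
  classical
  set b := (EuclideanSpace.basisFun (Fin 2) ℝ).toBasis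
  rw [← LinearMap.det_toMatrix b, Matrix.det_fin_two]
  have h00 : LinearMap.toMatrix b b (shear u v) 0 0 = u 0 := by
    simp [LinearMap.toMatrix_apply, b, EuclideanSpace.basisFun_apply, shear_e1,
      OrthonormalBasis.coe_toBasis, OrthonormalBasis.coe_toBasis_repr_apply,
      EuclideanSpace.basisFun_repr]
  have h10 : LinearMap.toMatrix b b (shear u v) 1 0 = u 1 := by
    simp [LinearMap.toMatrix_apply, b, EuclideanSpace.basisFun_apply, shear_e1,
      OrthonormalBasis.coe_toBasis, OrthonormalBasis.coe_toBasis_repr_apply,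
      EuclideanSpace.basisFun_repr]
  have h01 : LinearMap.toMatrix b b (shear u v) 0 1 = v 0 := by
    simp [LinearMap.toMatrix_apply, b, EuclideanSpace.basisFun_apply, shear_e2,
      OrthonormalBasis.coe_toBasis, OrthonormalBasis.coe_toBasis_repr_apply,
      EuclideanSpace.basisFun_repr]
  have h11 : LinearMap.toMatrix b b (shear u v) 1 1 = v 1 := by
    simp [LinearMap.toMatrix_apply, b, EuclideanSpace.basisFun_apply, shear_e2,
      OrthonormalBasis.coe_toBasis, OrthonormalBasis.coe_toBasis_repr_apply,
      EuclideanSpace.basisFun_repr]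
  rw [h00, h10, h01, h11]

lemma shear_e1' (u v : Pt) : shear u v e1 = u := shear_e1 u v

lemma shear_e2' (u v : Pt) : shear u v e2 = v := shear_e2 u v

lemma image_shear_corner (u v : Pt) :
    shear u v '' corner = convexHull ℝ ({0, u, v} : Set Pt) := by
  rw [corner, (shear u v).image_convexHull]
  congr 1
  rw [Set.image_insert_eq, Set.image_insert_eq, Set.image_singleton,
    map_zero, shear_e1', shear_e2']

lemma volume_image_add (a : Pt) (s : Set Pt) :
    volume ((fun x => a + x) '' s) = volume s := by
  have : (fun x => a + x) '' s = (fun x => (-a) + x) ⁻¹' s := by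
    ext x
    constructor
    · rintro ⟨y, hy, rfl⟩
      simpa [neg_add_cancel_left] using hy
    · intro hx
      exact ⟨-a + x, hx, by simp⟩
  rw [this, measure_preimage_add]

lemma volume_triangle (a b c : Pt) :
    volume (convexHull ℝ ({a, b, c} : Set Pt)) =
      ENNReal.ofReal |(b-a) 0 * (c-a) 1 - (c-a) 0 * (b-a) 1| * volume corner := by
  set u := b - a with hu
  set v := c - a with hv
  have hset : ({a, b, c} : Set Pt) = a +ᵥ ({0, u, v} : Set Pt) := by
    have : a +ᵥ ({0, u, v} : Set Pt) = (fun x => a + x) '' ({0, u, v} : Set Pt) := by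
      rw [← Set.image_vadd]; rfl
    rw [this, Set.image_insert_eq, Set.image_insert_eq, Set.image_singleton]
    simp [hu, hv]
  rw [hset, convexHull_vadd]
  have : volume (a +ᵥ convexHull ℝ ({0, u, v} : Set Pt))
      = volume (convexHull ℝ ({0, u, v} : Set Pt)) := by
    rw [show a +ᵥ convexHull ℝ ({0, u, v} : Set Pt)
        = (fun x => a + x) '' convexHull ℝ ({0, u, v} : Set Pt) by rw [← Set.image_vadd]; rfl]
    exact volume_image_add a _
  rw [this, ← image_shear_corner, Measure.addHaar_image_linearMap, shear_det]

lemma abs_det_eq (a b c : Pt) :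
    |(b-a) 0 * (c-a) 1 - (c-a) 0 * (b-a) 1|
      = Real.sin (∠ b a c) * (‖b - a‖ * ‖c - a‖) := by
  rw [EuclideanGeometry.angle]
  have hbv : b -ᵥ a = b - a := rfl
  have hcv : c -ᵥ a = c - a := rfl
  rw [hbv, hcv, InnerProductGeometry.sin_angle_mul_norm_mul_norm]
  set u := b - a
  set v := c - a
  have hin : ∀ x y : Pt, ⟪x, y⟫ = x 0 * y 0 + x 1 * y 1 := by
    intro x y
    rw [PiLp.inner_apply, Fin.sum_univ_two]
    simp [RCLike.inner_apply, conj_trivial]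
    ring
  rw [hin, hin, hin]
  have hsq : (u 0 * u 0 + u 1 * u 1) * (v 0 * v 0 + v 1 * v 1)
      - (u 0 * v 0 + u 1 * v 1) * (u 0 * v 0 + u 1 * v 1)
      = (u 0 * v 1 - v 0 * u 1) ^ 2 := by ring
  rw [hsq, Real.sqrt_sq_eq_abs]

lemma sin_angle_lower {δ' θ : ℝ} (h0 : 0 < δ') (h3 : δ' ≤ Real.pi/3)
    (hθ1 : δ' ≤ θ) (hθ2 : θ ≤ Real.pi - 2*δ') :
    min (Real.sin δ') (Real.sin (2*δ')) ≤ Real.sin θ := by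
  have hπ := Real.pi_pos
  rcases le_or_gt θ (Real.pi/2) with h | h
  · refine le_trans (min_le_left _ _) ?_
    have m1 : δ' ∈ Set.Icc (-(Real.pi/2)) (Real.pi/2) :=
      Set.mem_Icc.mpr ⟨by linarith, by linarith⟩
    have m2 : θ ∈ Set.Icc (-(Real.pi/2)) (Real.pi/2) :=
      Set.mem_Icc.mpr ⟨by linarith, h⟩
    exact Real.strictMonoOn_sin.monotoneOn m1 m2 hθ1
  · rw [show Real.sin θ = Real.sin (Real.pi - θ) from (Real.sin_pi_sub θ).symm]
    refine le_trans (min_le_right _ _) ?_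
    have m1 : 2*δ' ∈ Set.Icc (-(Real.pi/2)) (Real.pi/2) :=
      Set.mem_Icc.mpr ⟨by linarith, by linarith⟩
    have m2 : Real.pi - θ ∈ Set.Icc (-(Real.pi/2)) (Real.pi/2) :=
      Set.mem_Icc.mpr ⟨by linarith, by linarith⟩
    exact Real.strictMonoOn_sin.monotoneOn m1 m2 (by linarith)

lemma volume_tri_lower {δ' : ℝ} (h0 : 0 < δ') (h3 : δ' ≤ Real.pi/3) (T : Tri)
    (hnd : T.Nondeg) (hfat : T.Fat δ')
    (hab : 1 ≤ dist T.a T.b) (hac : 1 ≤ dist T.a T.c) :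
    ENNReal.ofReal (min (Real.sin δ') (Real.sin (2*δ'))) * volume corner
      ≤ volume T.carrier := by
  have hnc : ¬ Collinear ℝ ({T.a, T.b, T.c} : Set Pt) := hnd
  have hba : T.b ≠ T.a := (ne₁₂_of_not_collinear hnc).symm
  have hca : T.c ≠ T.a := (ne₁₃_of_not_collinear hnc).symm
  have hsum := EuclideanGeometry.angle_add_angle_add_angle_eq_pi (p₁ := T.a) T.c hba
  set θ := ∠ T.b T.a T.c with hθ
  have hcab : ∠ T.c T.a T.b = θ := EuclideanGeometry.angle_comm _ _ _
  have hbca : ∠ T.b T.c T.a = ∠ T.a T.c T.b := EuclideanGeometry.angle_comm _ _ _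
  have hθup : θ ≤ Real.pi - 2*δ' := by
    have h1 := hfat.2.1
    have h2 := hfat.2.2
    rw [hcab] at hsum
    rw [hbca] at hsum
    linarith
  have hsin : min (Real.sin δ') (Real.sin (2*δ')) ≤ Real.sin θ :=
    sin_angle_lower h0 h3 hfat.1 hθup
  have hsin0 : 0 ≤ Real.sin θ :=
    Real.sin_nonneg_of_nonneg_of_le_pi (EuclideanGeometry.angle_nonneg _ _ _)
      (EuclideanGeometry.angle_le_pi _ _ _)
  have hnb : 1 ≤ ‖T.b - T.a‖ := by
    rw [← dist_eq_norm, dist_comm]; exact hab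
  have hnc' : 1 ≤ ‖T.c - T.a‖ := by
    rw [← dist_eq_norm, dist_comm]; exact hac
  have hdet : min (Real.sin δ') (Real.sin (2*δ'))
      ≤ |(T.b-T.a) 0 * (T.c-T.a) 1 - (T.c-T.a) 0 * (T.b-T.a) 1| := by
    rw [abs_det_eq T.a T.b T.c]
    calc min (Real.sin δ') (Real.sin (2*δ')) ≤ Real.sin θ := hsin
      _ = Real.sin θ * 1 := (mul_one _).symm
      _ ≤ Real.sin θ * (‖T.b - T.a‖ * ‖T.c - T.a‖) := by
          apply mul_le_mul_of_nonneg_left _ hsin0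
          nlinarith
  have hcar : T.carrier = convexHull ℝ ({T.a, T.b, T.c} : Set Pt) := rfl
  rw [hcar, volume_triangle]
  exact mul_le_mul_left (ENNReal.ofReal_le_ofReal hdet) _

lemma carrier_subset_ball {ρ : ℝ} (T : Tri) (hab : dist T.a T.b ≤ ρ)
    (hac : dist T.a T.c ≤ ρ) (hρ : 0 ≤ ρ) : T.carrier ⊆ Metric.closedBall T.a ρ := by
  apply convexHull_min _ (convex_closedBall _ _)
  intro x hx
  rcases hx with rfl | rfl | rfl
  · simpa using hρ
  · simpa [Metric.mem_closedBall, dist_comm] using hab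
  · simpa [Metric.mem_closedBall, dist_comm] using hac

lemma volume_le_interior (T : Tri) : volume T.carrier ≤ volume (interior T.carrier) := by
  have hconv : Convex ℝ T.carrier := convex_convexHull _ _
  have hfr : volume (frontier T.carrier) = 0 := hconv.addHaar_frontier volume
  calc volume T.carrier ≤ volume (interior T.carrier ∪ frontier T.carrier) := by
        apply measure_mono
        intro x hx
        have : x ∈ closure T.carrier := subset_closure hx
        rwa [← closure_eq_interior_union_frontier]
      _ ≤ volume (interior T.carrier) + volume (frontier T.carrier) := measure_union_le _ _
      _ = volume (interior T.carrier) := by rw [hfr, add_zero]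

lemma interior_carrier_nonempty (T : Tri) (hnd : T.Nondeg) :
    (interior T.carrier).Nonempty :=
  interior_convexHull_nonempty_iff_affineSpan_eq_top.mpr (affineSpan_top_of_not_collinear hnd)

lemma packing (M : Mesh) {a : ENNReal}
    (hvol : ∀ T ∈ M.tris, a ≤ volume (interior T.carrier))
    (v : Pt) (R : ℝ) (F : Finset Tri)
    (hF : ∀ T ∈ F, T ∈ M.tris ∧ T.carrier ⊆ Metric.closedBall v R) :
    (F.card : ENNReal) * a ≤ volume (Metric.closedBall v R) := by
  have hdisj : (↑F : Set Tri).PairwiseDisjoint (fun T => interior T.carrier) := by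
    intro T hT T' hT' hne
    have := (M.proper T (hF T hT).1 T' (hF T' hT').1 hne).1
    exact Set.disjoint_iff_inter_eq_empty.mpr this
  have hmeas : ∀ T ∈ F, MeasurableSet (interior T.carrier) :=
    fun T _ => isOpen_interior.measurableSet
  have hsum : ∑ T ∈ F, volume (interior T.carrier)
      = volume (⋃ T ∈ F, interior T.carrier) :=
    (measure_biUnion_finset hdisj hmeas).symm
  calc (F.card : ENNReal) * a = ∑ _T ∈ F, a := by
        rw [Finset.sum_const, nsmul_eq_mul]
    _ ≤ ∑ T ∈ F, volume (interior T.carrier) :=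
        Finset.sum_le_sum (fun T hT => hvol T (hF T hT).1)
    _ = volume (⋃ T ∈ F, interior T.carrier) := hsum
    _ ≤ volume (Metric.closedBall v R) := by
        apply measure_mono
        apply Set.iUnion₂_subset
        intro T hT
        exact interior_subset.trans (hF T hT).2

end CarrotAux

/-- For every `δ ∈ (0, 2π/3]`, `ρ ≥ 1` and `γ ≥ 1` there is `C > 0` such that
every `δ`-fat mesh with `n` vertices and all edge lengths in `[1, ρ]` has at most `C · n`
distinct `γ`-fat carrots respecting it. -/
theorem fat_carrots_linear_bound (δ : ℝ) (hδ : δ ∈ Set.Ioc 0 (2 * Real.pi / 3))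
    (ρ : ℝ) (hρ : 1 ≤ ρ) (γ : ℝ) (hγ : 1 ≤ γ) :
    ∃ C : ℝ, 0 < C ∧ ∀ M : Mesh, M.Fat δ → M.EdgesIn ρ →
      ({P : Set Pt | M.IsCarrot P ∧ GammaFat γ P}.ncard : ℝ) ≤ C * M.verts.ncard := by
  classical
  open CarrotAux Metric MeasureTheory in
  obtain ⟨hδ0, hδtop⟩ := hδ
  have hπ := Real.pi_pos
  set δ' := min δ (Real.pi/3) with hδ'def
  have hδ'0 : 0 < δ' := lt_min hδ0 (by positivity)
  have hδ'3 : δ' ≤ Real.pi/3 := min_le_right _ _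
  set s0 := min (Real.sin δ') (Real.sin (2*δ')) with hs0def
  have hs0pos : 0 < s0 := by
    apply lt_min
    · exact Real.sin_pos_of_pos_of_lt_pi hδ'0 (by linarith)
    · exact Real.sin_pos_of_pos_of_lt_pi (by linarith) (by linarith)
  set a : ENNReal := ENNReal.ofReal s0 * MeasureTheory.volume CarrotAux.corner with hadef
  have ha0 : a ≠ 0 :=
    mul_ne_zero (ENNReal.ofReal_pos.mpr hs0pos).ne' CarrotAux.corner_volume_pos.ne'
  have hatop : a ≠ ⊤ := ENNReal.mul_ne_top ENNReal.ofReal_ne_top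
    CarrotAux.corner_volume_lt_top.ne
  set R := 2*(γ*ρ) with hRdef
  set Vb := MeasureTheory.volume (Metric.closedBall (0:Pt) R) with hVbdef
  have hVbtop : Vb ≠ ⊤ := (MeasureTheory.measure_closedBall_lt_top).ne
  have hVbv : ∀ v : Pt, MeasureTheory.volume (Metric.closedBall v R) = Vb := by
    intro v
    rw [hVbdef, EuclideanSpace.volume_closedBall, EuclideanSpace.volume_closedBall]
  set K := Nat.ceil ((Vb / a).toReal) with hKdef
  refine ⟨(2:ℝ)^K, by positivity, ?_⟩
  intro M hMfat hMedge
  -- per-triangle volume lower bound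
  have hvol : ∀ T ∈ M.tris, a ≤ MeasureTheory.volume (interior T.carrier) := by
    intro T hT
    have hfat' : T.Fat δ' := by
      obtain ⟨h1, h2, h3⟩ := hMfat T hT
      have : δ' ≤ δ := min_le_left _ _
      exact ⟨le_trans this h1, le_trans this h2, le_trans this h3⟩
    obtain ⟨he1, he2, he3⟩ := hMedge T hT
    refine le_trans ?_ (CarrotAux.volume_le_interior T)
    exact CarrotAux.volume_tri_lower hδ'0 hδ'3 T (M.nondeg T hT) hfat' he1.1 he3.1
  -- carriers inside ρ-balls around a vertex
  have hcarball : ∀ T ∈ M.tris, T.carrier ⊆ Metric.closedBall T.a ρ := by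
    intro T hT
    obtain ⟨he1, he2, he3⟩ := hMedge T hT
    exact CarrotAux.carrier_subset_ball T he1.2 he3.2 (by linarith)
  have hvertmem : ∀ T ∈ M.tris, T.a ∈ M.verts := by
    intro T hT
    exact Set.mem_biUnion hT (by simp [Tri.verts])
  set carrSet := {P : Set Pt | M.IsCarrot P ∧ GammaFat γ P} with hcarrdef
  -- Step A : each carrot is near a vertex
  have stepA : ∀ P ∈ carrSet, ∃ v ∈ M.verts, P ⊆ Metric.closedBall v R := by
    intro P hP
    obtain ⟨⟨⟨S, hS, hSne, hPU, hPconv⟩, hnovert⟩, c₁, r₁, c₂, r₂, h₁, h₂, hr₂0, hr₁γ⟩ := hP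
    have hr₂ρ : r₂ ≤ ρ := by
      by_contra hlt
      push_neg at hlt
      have hc₂P : c₂ ∈ P := h₂ (Metric.mem_closedBall_self hr₂0)
      rw [hPU] at hc₂P
      obtain ⟨T, hT, hc₂T⟩ := Set.mem_iUnion₂.mp hc₂P
      have hTtris := hS hT
      have hd : dist c₂ T.a ≤ ρ := by
        have := hcarball T hTtris hc₂T
        simpa [Metric.mem_closedBall] using this
      have hTa : T.a ∈ Metric.ball c₂ r₂ := by
        rw [Metric.mem_ball, dist_comm]
        exact lt_of_le_of_lt hd hlt
      have : T.a ∈ interior P :=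
        interior_maximal (Metric.ball_subset_closedBall.trans h₂) Metric.isOpen_ball hTa
      exact hnovert T.a (hvertmem T hTtris) this
    have hr₁ : r₁ ≤ γ * ρ :=
      le_trans hr₁γ (mul_le_mul_of_nonneg_left hr₂ρ (by linarith))
    obtain ⟨T₀, hT₀⟩ := hSne
    refine ⟨T₀.a, hvertmem T₀ (hS hT₀), ?_⟩
    have hvP : T₀.a ∈ P := by
      rw [hPU]
      exact Set.mem_biUnion hT₀ (subset_convexHull ℝ _ (by simp [Tri.verts]))
    intro x hx
    rw [Metric.mem_closedBall]
    have h1 : dist x c₁ ≤ r₁ := h₁ hx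
    have h2 : dist T₀.a c₁ ≤ r₁ := h₁ hvP
    calc dist x T₀.a ≤ dist x c₁ + dist c₁ T₀.a := dist_triangle _ _ _
      _ ≤ r₁ + r₁ := by rw [dist_comm c₁ T₀.a]; exact add_le_add h1 h2
      _ ≤ R := by rw [hRdef]; linarith
  -- choice of vertex
  set f : Set Pt → Pt := fun P =>
    if h : ∃ v ∈ M.verts, P ⊆ Metric.closedBall v R then h.choose else 0 with hfdef
  have hf : ∀ P ∈ carrSet, f P ∈ M.verts ∧ P ⊆ Metric.closedBall (f P) R := by
    intro P hP
    have h := stepA P hP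
    rw [hfdef]
    simp only [dif_pos h]
    exact h.choose_spec
  -- canonical triangle set
  set g : Set Pt → Finset Tri := fun P =>
    (M.finite.subset (Set.sep_subset _ (fun T => T.carrier ⊆ P))).toFinset with hgdef
  have hgmem : ∀ P T, T ∈ g P ↔ T ∈ M.tris ∧ T.carrier ⊆ P := by
    intro P T
    rw [hgdef]
    simp [Set.Finite.mem_toFinset, Set.mem_sep_iff]
  have hgU : ∀ P ∈ carrSet, P = ⋃ T ∈ g P, T.carrier := by
    intro P hP
    obtain ⟨⟨⟨S, hS, hSne, hPU, hPconv⟩, hnovert⟩, hfatP⟩ := hP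
    apply Set.Subset.antisymm
    · intro x hx
      rw [hPU] at hx
      obtain ⟨T, hT, hxT⟩ := Set.mem_iUnion₂.mp hx
      have hTg : T ∈ g P := (hgmem P T).mpr ⟨hS hT, by
        rw [hPU]; exact Set.subset_biUnion_of_mem hT⟩
      exact Set.mem_biUnion hTg hxT
    · apply Set.iUnion₂_subset
      intro T hT
      exact ((hgmem P T).mp hT).2
  -- the finset of triangles near a vertex
  set Fv : Pt → Finset Tri := fun v =>
    (M.finite.subset (Set.sep_subset _ (fun T => T.carrier ⊆ Metric.closedBall v R))).toFinset
    with hFvdef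
  have hFvmem : ∀ v T, T ∈ Fv v ↔ T ∈ M.tris ∧ T.carrier ⊆ Metric.closedBall v R := by
    intro v T
    rw [hFvdef]
    simp [Set.Finite.mem_toFinset, Set.mem_sep_iff]
  have hFvK : ∀ v : Pt, (Fv v).card ≤ K := by
    intro v
    have hpack := CarrotAux.packing M hvol v R (Fv v) (fun T hT => (hFvmem v T).mp hT)
    rw [hVbv v] at hpack
    have h1 : ((Fv v).card : ENNReal) ≤ Vb / a :=
      (ENNReal.le_div_iff_mul_le (Or.inl ha0) (Or.inl hatop)).mpr hpack
    have h2 : (((Fv v).card : ℕ) : ℝ) ≤ (Vb / a).toReal := by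
      have hne : Vb / a ≠ ⊤ := (ENNReal.div_lt_top hVbtop ha0).ne
      have := ENNReal.toReal_mono hne h1
      simpa using this
    have h3 : (((Fv v).card : ℕ) : ℝ) ≤ (K : ℝ) := le_trans h2 (Nat.le_ceil _)
    exact_mod_cast h3
  -- vertices as a finset
  have hVfin : M.verts.Finite := M.finite.biUnion (fun T _ => Set.Finite.insert T.a (Set.Finite.insert T.b (Set.finite_singleton T.c)))
  set Vfin := hVfin.toFinset with hVfindef
  -- injection
  set Φ : Set Pt → Pt × Finset Tri := fun P => (f P, g P) with hΦdef
  have hinj : Set.InjOn Φ carrSet := by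
    intro P hP Q hQ hPQ
    have hg : g P = g Q := congrArg Prod.snd hPQ
    rw [hgU P hP, hgU Q hQ, hg]
  set target : Finset (Pt × Finset Tri) :=
    Vfin.biUnion (fun v => {v} ×ˢ (Fv v).powerset) with htargetdef
  have hmaps : ∀ P ∈ carrSet, Φ P ∈ target := by
    intro P hP
    rw [htargetdef, Finset.mem_biUnion]
    refine ⟨f P, hVfin.mem_toFinset.mpr (hf P hP).1, ?_⟩
    rw [Finset.mem_product]
    constructor
    · simp [hΦdef]
    · rw [Finset.mem_powerset]
      intro T hT
      rw [hFvmem]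
      obtain ⟨hT1, hT2⟩ := (hgmem P T).mp hT
      exact ⟨hT1, hT2.trans (hf P hP).2⟩
  -- counting
  have hcount : carrSet.ncard ≤ target.card := by
    rw [← Set.ncard_image_of_injOn hinj, ← Set.ncard_coe_finset target]
    apply Set.ncard_le_ncard _ target.finite_toSet
    rintro _ ⟨P, hP, rfl⟩
    exact hmaps P hP
  have htarget : target.card ≤ Vfin.card * 2^K := by
    rw [htargetdef]
    refine le_trans (Finset.card_biUnion_le) ?_
    have : ∀ v ∈ Vfin, ({v} ×ˢ (Fv v).powerset).card ≤ 2^K := by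
      intro v _
      rw [Finset.card_product, Finset.card_singleton, one_mul, Finset.card_powerset]
      exact Nat.pow_le_pow_right (by norm_num) (hFvK v)
    calc ∑ v ∈ Vfin, ({v} ×ˢ (Fv v).powerset).card ≤ ∑ _v ∈ Vfin, 2^K :=
          Finset.sum_le_sum this
      _ = Vfin.card * 2^K := by rw [Finset.sum_const, smul_eq_mul]
  have hVcard : Vfin.card = M.verts.ncard := (Set.ncard_eq_toFinset_card _ hVfin).symm
  have : (carrSet.ncard : ℝ) ≤ (Vfin.card * 2^K : ℕ) := by exact_mod_cast le_trans hcount htarget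
  rw [hVcard] at this
  calc (carrSet.ncard : ℝ) ≤ ((M.verts.ncard * 2^K : ℕ) : ℝ) := this
    _ = (2:ℝ)^K * (M.verts.ncard : ℝ) := by push_cast; ring
end
end

section
/- There exist constants δ ∈ (0, 2π/3], ρ ≥ 1, c > 0 and a threshold n₀ such that for every integer n ≥ n₀ there exists a δ-fat mesh M with n vertices, all of whose edges have length in [1, ρ], for which the number of distinct convex outerplanar polygons (carrots) that respect M is at least c · n². -/
open scoped RealInnerProductSpace
open EuclideanGeometry

noncomputable section

-- ===== auxiliary development =====
def pt (x y : ℝ) : Pt := WithLp.toLp 2 ![x, y]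

lemma comb0 (p q : Pt) (a b : ℝ) : (a • p + b • q) 0 = a * p 0 + b * q 0 := rfl
lemma comb1 (p q : Pt) (a b : ℝ) : (a • p + b • q) 1 = a * p 1 + b * q 1 := rfl

lemma pt_ext {p : Pt} {x y : ℝ} (h0 : p 0 = x) (h1 : p 1 = y) : p = pt x y := by
  ext i
  fin_cases i
  · exact h0
  · exact h1

def lowT (k : ℕ) : Tri := ⟨pt k 0, pt (k+1) 0, pt (k+1) 1⟩
def upT (k : ℕ) : Tri := ⟨pt k 0, pt k 1, pt (k+1) 1⟩
def dT : Tri := ⟨pt 0 0, pt 1 0, pt (1/2) (-1)⟩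

lemma mem_hull3 {a b c p : Pt} {α β γ : ℝ} (hα : 0 ≤ α) (hβ : 0 ≤ β) (hγ : 0 ≤ γ)
    (hs : α + β + γ = 1) (hp : p = α • a + β • b + γ • c) :
    p ∈ convexHull ℝ ({a, b, c} : Set Pt) := by
  have h := convex_convexHull ℝ ({a, b, c} : Set Pt)
  have key := h.sum_mem (t := (Finset.univ : Finset (Fin 3))) (w := ![α, β, γ]) (z := ![a, b, c])
    (by intro i _; fin_cases i <;> assumption)
    (by simp [Fin.sum_univ_three]; linarith)
    (by intro i _; apply subset_convexHull; fin_cases i <;> simp)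
  rw [Fin.sum_univ_three] at key
  simp only [Matrix.cons_val_zero, Matrix.cons_val_one, Matrix.head_cons,
    Matrix.cons_val_two, Matrix.tail_cons] at key
  rw [hp]; exact key

lemma convex_coord (f : Pt → Prop)
    (h : ∀ p q : Pt, ∀ a b : ℝ, 0 ≤ a → 0 ≤ b → a + b = 1 → f p → f q →
      f (a • p + b • q)) : Convex ℝ {p : Pt | f p} := by
  intro p hp q hq a b ha hb hab
  exact h p q a b ha hb hab hp hq

lemma lowT_carrier (k : ℕ) :
    (lowT k).carrier = {p : Pt | 0 ≤ p 1 ∧ p 1 ≤ p 0 - k ∧ p 0 ≤ k + 1} := by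
  apply subset_antisymm
  · apply convexHull_min
    · rintro q (rfl | rfl | rfl) <;> refine ⟨?_, ?_, ?_⟩ <;> simp [lowT, pt] <;> norm_num
    · apply convex_coord
      intro p q a b ha hb hab ⟨h1, h2, h3⟩ ⟨g1, g2, g3⟩
      refine ⟨?_, ?_, ?_⟩ <;> simp only [Set.mem_setOf_eq, comb0, comb1] <;> nlinarith
  · rintro p ⟨h1, h2, h3⟩
    refine mem_hull3 (α := (k+1) - p 0) (β := p 0 - k - p 1) (γ := p 1)
      (by linarith) (by linarith) (by linarith) (by ring) ?_
    ext i
    fin_cases i <;> simp [lowT, pt, PiLp.add_apply, PiLp.smul_apply, smul_eq_mul] <;> ring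

lemma upT_carrier (k : ℕ) :
    (upT k).carrier = {p : Pt | p 1 ≤ 1 ∧ p 0 - k ≤ p 1 ∧ (k : ℝ) ≤ p 0} := by
  apply subset_antisymm
  · apply convexHull_min
    · rintro q (rfl | rfl | rfl) <;> refine ⟨?_, ?_, ?_⟩ <;> simp [upT, pt] <;> norm_num
    · apply convex_coord
      intro p q a b ha hb hab ⟨h1, h2, h3⟩ ⟨g1, g2, g3⟩
      refine ⟨?_, ?_, ?_⟩ <;> simp only [Set.mem_setOf_eq, comb0, comb1] <;> nlinarith
  · rintro p ⟨h1, h2, h3⟩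
    refine mem_hull3 (α := 1 - p 1) (β := p 1 - p 0 + k) (γ := p 0 - k)
      (by linarith) (by linarith) (by linarith) (by ring) ?_
    ext i
    fin_cases i <;> simp [upT, pt, PiLp.add_apply, PiLp.smul_apply, smul_eq_mul] <;> ring

lemma dT_carrier :
    dT.carrier = {p : Pt | p 1 ≤ 0 ∧ -2 * p 0 ≤ p 1 ∧ 2 * p 0 - 2 ≤ p 1} := by
  apply subset_antisymm
  · apply convexHull_min
    · rintro q (rfl | rfl | rfl) <;> refine ⟨?_, ?_, ?_⟩ <;> simp [dT, pt] <;> norm_num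
    · apply convex_coord
      intro p q a b ha hb hab ⟨h1, h2, h3⟩ ⟨g1, g2, g3⟩
      refine ⟨?_, ?_, ?_⟩ <;> simp only [Set.mem_setOf_eq, comb0, comb1] <;> nlinarith
  · rintro p ⟨h1, h2, h3⟩
    refine mem_hull3 (α := 1 - p 0 + p 1 / 2) (β := p 0 + p 1 / 2) (γ := -(p 1))
      (by linarith) (by linarith) (by linarith) (by ring) ?_
    ext i
    fin_cases i <;> simp [dT, pt, PiLp.add_apply, PiLp.smul_apply, smul_eq_mul] <;> ring

-- interior of halfplanes
lemma interior_hp (w0 w1 c : ℝ) (hw : ¬ (w0 = 0 ∧ w1 = 0)) :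
    interior {p : Pt | w0 * p 0 + w1 * p 1 ≤ c} = {p : Pt | w0 * p 0 + w1 * p 1 < c} := by
  let f : Pt →L[ℝ] ℝ :=
    w0 • EuclideanSpace.proj 0 + w1 • EuclideanSpace.proj 1
  have hsurj : Function.Surjective f := by
    intro y
    refine ⟨(y / (w0^2 + w1^2)) • WithLp.toLp 2 ![w0, w1], ?_⟩
    have h : w0^2 + w1^2 ≠ 0 := by
      rcases not_and_or.1 hw with h | h <;> positivity
    simp [f, ContinuousLinearMap.proj_apply]
    field_simp
  change interior (f ⁻¹' Set.Iic c) = f ⁻¹' Set.Iio c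
  rw [f.interior_preimage hsurj, interior_Iic]

lemma interior_le {S : Set Pt} (w0 w1 c : ℝ) (hw : ¬ (w0 = 0 ∧ w1 = 0))
    (hS : ∀ p ∈ S, w0 * p 0 + w1 * p 1 ≤ c) :
    ∀ p ∈ interior S, w0 * p 0 + w1 * p 1 < c := by
  intro p hp
  have h1 : interior S ⊆ interior {q : Pt | w0 * q 0 + w1 * q 1 ≤ c} := interior_mono hS
  rw [interior_hp w0 w1 c hw] at h1
  exact h1 hp

lemma interior_lowT (k : ℕ) :
    interior (lowT k).carrier ⊆ {p : Pt | 0 < p 1 ∧ p 1 < p 0 - k ∧ p 0 < k + 1} := by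
  intro p hp
  rw [lowT_carrier] at hp
  have h1 := interior_le 0 (-1) 0 (by norm_num) (fun q hq => by
    simp only [Set.mem_setOf_eq] at hq; linarith [hq.1]) p hp
  have h2 := interior_le (-1) 1 (-(k:ℝ)) (by norm_num) (fun q hq => by
    simp only [Set.mem_setOf_eq] at hq; linarith [hq.2.1]) p hp
  have h3 := interior_le 1 0 ((k:ℝ)+1) (by norm_num) (fun q hq => by
    simp only [Set.mem_setOf_eq] at hq; linarith [hq.2.2]) p hp
  refine ⟨by linarith, by linarith, by linarith⟩

lemma interior_upT (k : ℕ) :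
    interior (upT k).carrier ⊆ {p : Pt | p 1 < 1 ∧ p 0 - k < p 1 ∧ (k : ℝ) < p 0} := by
  intro p hp
  rw [upT_carrier] at hp
  have h1 := interior_le 0 1 1 (by norm_num) (fun q hq => by
    simp only [Set.mem_setOf_eq] at hq; linarith [hq.1]) p hp
  have h2 := interior_le 1 (-1) ((k:ℝ)) (by norm_num) (fun q hq => by
    simp only [Set.mem_setOf_eq] at hq; linarith [hq.2.1]) p hp
  have h3 := interior_le (-1) 0 (-(k:ℝ)) (by norm_num) (fun q hq => by
    simp only [Set.mem_setOf_eq] at hq; linarith [hq.2.2]) p hp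
  refine ⟨by linarith, by linarith, by linarith⟩

lemma interior_dT :
    interior dT.carrier ⊆ {p : Pt | p 1 < 0} := by
  intro p hp
  rw [dT_carrier] at hp
  have h1 := interior_le 0 1 0 (by norm_num) (fun q hq => by
    simp only [Set.mem_setOf_eq] at hq; linarith [hq.1]) p hp
  simpa using by linarith

-- segments
lemma seg_diag (k : ℝ) : segment ℝ (pt k 0) (pt (k+1) 1) =
    {p : Pt | p 0 = k + p 1 ∧ 0 ≤ p 1 ∧ p 1 ≤ 1} := by
  rw [segment_eq_image]
  ext p
  constructor
  · rintro ⟨θ, ⟨h0, h1⟩, rfl⟩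
    refine ⟨?_, ?_, ?_⟩ <;> simp [comb0, comb1, pt] <;> ring_nf <;> linarith
  · rintro ⟨h0, h1, h2⟩
    refine ⟨p 1, ⟨h1, h2⟩, ?_⟩
    ext i
    fin_cases i <;>
      simp only [pt, PiLp.add_apply, PiLp.smul_apply, smul_eq_mul, Matrix.cons_val_zero,
        Matrix.cons_val_one, Matrix.head_cons] <;>
      [skip; skip] <;> first
      | (show (1 - p 1) * k + p 1 * (k+1) = p 0; rw [h0]; ring)
      | (show (1 - p 1) * (0:ℝ) + p 1 * 1 = p 1; ring)

lemma seg_vert (k : ℝ) : segment ℝ (pt k 0) (pt k 1) =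
    {p : Pt | p 0 = k ∧ 0 ≤ p 1 ∧ p 1 ≤ 1} := by
  rw [segment_eq_image]
  ext p
  constructor
  · rintro ⟨θ, ⟨h0, h1⟩, rfl⟩
    refine ⟨?_, ?_, ?_⟩ <;> simp [comb0, comb1, pt] <;> ring_nf <;> linarith
  · rintro ⟨h0, h1, h2⟩
    refine ⟨p 1, ⟨h1, h2⟩, ?_⟩
    ext i
    fin_cases i <;>
      simp only [pt, PiLp.add_apply, PiLp.smul_apply, smul_eq_mul, Matrix.cons_val_zero,
        Matrix.cons_val_one, Matrix.head_cons] <;> first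
      | (show (1 - p 1) * k + p 1 * k = p 0; rw [h0]; ring)
      | (show (1 - p 1) * (0:ℝ) + p 1 * 1 = p 1; ring)

lemma seg_bot : segment ℝ (pt 0 0) (pt 1 0) =
    {p : Pt | p 1 = 0 ∧ 0 ≤ p 0 ∧ p 0 ≤ 1} := by
  rw [segment_eq_image]
  ext p
  constructor
  · rintro ⟨θ, ⟨h0, h1⟩, rfl⟩
    refine ⟨?_, ?_, ?_⟩ <;> simp [comb0, comb1, pt] <;> ring_nf <;> linarith
  · rintro ⟨h0, h1, h2⟩
    refine ⟨p 0, ⟨h1, h2⟩, ?_⟩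
    ext i
    fin_cases i <;>
      simp only [pt, PiLp.add_apply, PiLp.smul_apply, smul_eq_mul, Matrix.cons_val_zero,
        Matrix.cons_val_one, Matrix.head_cons] <;> first
      | (show (1 - p 0) * (0:ℝ) + p 0 * 1 = p 0; ring)
      | (show (1 - p 0) * (0:ℝ) + p 0 * 0 = p 1; rw [h0]; ring)
lemma pt_eq_pt {x y x' y' : ℝ} : pt x y = pt x' y' ↔ x = x' ∧ y = y' := by
  constructor
  · intro h
    exact ⟨congrArg (fun p : Pt => p 0) h, congrArg (fun p : Pt => p 1) h⟩
  · rintro ⟨rfl, rfl⟩; rfl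

def PairOK (T T' : Tri) : Prop :=
  interior T.carrier ∩ interior T'.carrier = ∅ ∧
  (T.carrier ∩ T'.carrier = ∅ ∨
    (∃ v ∈ T.verts ∩ T'.verts, T.carrier ∩ T'.carrier = {v}) ∨
    (∃ e ∈ T.edgeSegs ∩ T'.edgeSegs, T.carrier ∩ T'.carrier = e))

lemma PairOK.symm {T T' : Tri} (h : PairOK T T') : PairOK T' T := by
  obtain ⟨h1, h2⟩ := h
  refine ⟨by rw [Set.inter_comm]; exact h1, ?_⟩
  rw [Set.inter_comm T'.carrier, Set.inter_comm T'.verts]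
  rcases h2 with h | h | ⟨e, he, heq⟩
  · exact Or.inl h
  · exact Or.inr (Or.inl h)
  · exact Or.inr (Or.inr ⟨e, Set.inter_comm T'.edgeSegs T.edgeSegs ▸ he, heq⟩)

lemma pair_low_low {j k : ℕ} (h : j < k) : PairOK (lowT j) (lowT k) := by
  have hc : (j : ℝ) + 1 ≤ k := by exact_mod_cast h
  constructor
  · ext p
    simp only [Set.mem_inter_iff, Set.mem_empty_iff_false, iff_false, not_and]
    intro h1 h2
    obtain ⟨a1, a2, a3⟩ := interior_lowT j h1
    obtain ⟨b1, b2, b3⟩ := interior_lowT k h2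
    linarith
  · rcases eq_or_lt_of_le (Nat.succ_le_of_lt h) with heq | hlt
    · -- k = j + 1 : common vertex
      refine Or.inr (Or.inl ⟨pt ((j:ℝ)+1) 0, ?_, ?_⟩)
      · constructor <;> simp [lowT, Tri.verts, pt_eq_pt, ← heq] <;> norm_num
      · ext p
        rw [Set.mem_inter_iff, lowT_carrier, lowT_carrier, ← heq]
        push_cast
        constructor
        · rintro ⟨⟨h1, h2, h3⟩, g1, g2, g3⟩
          have hx : p 0 = (j:ℝ) + 1 := le_antisymm h3 (by linarith)
          have hy : p 1 = 0 := le_antisymm (by linarith) h1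
          exact Set.mem_singleton_iff.mpr (pt_ext hx hy)
        · rintro rfl
          norm_num [pt]
    · -- k ≥ j + 2 : empty
      have hc2 : (j : ℝ) + 2 ≤ k := by exact_mod_cast hlt
      refine Or.inl ?_
      ext p
      rw [Set.mem_inter_iff, lowT_carrier, lowT_carrier]
      simp only [Set.mem_setOf_eq, Set.mem_empty_iff_false, iff_false]
      rintro ⟨⟨h1, h2, h3⟩, g1, g2, g3⟩
      linarith
lemma pair_up_up {j k : ℕ} (h : j < k) : PairOK (upT j) (upT k) := by
  have hc : (j : ℝ) + 1 ≤ k := by exact_mod_cast h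
  constructor
  · ext p
    simp only [Set.mem_inter_iff, Set.mem_empty_iff_false, iff_false, not_and]
    intro h1 h2
    obtain ⟨a1, a2, a3⟩ := interior_upT j h1
    obtain ⟨b1, b2, b3⟩ := interior_upT k h2
    linarith
  · rcases eq_or_lt_of_le (Nat.succ_le_of_lt h) with heq | hlt
    · refine Or.inr (Or.inl ⟨pt ((j:ℝ)+1) 1, ?_, ?_⟩)
      · constructor <;> simp [upT, Tri.verts, pt_eq_pt, ← heq] <;> norm_num
      · ext p
        rw [Set.mem_inter_iff, upT_carrier, upT_carrier, ← heq]
        push_cast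
        constructor
        · rintro ⟨⟨h1, h2, h3⟩, g1, g2, g3⟩
          have hy : p 1 = 1 := le_antisymm h1 (by linarith)
          have hx : p 0 = (j:ℝ) + 1 := le_antisymm (by linarith) g3
          exact Set.mem_singleton_iff.mpr (pt_ext hx hy)
        · rintro rfl
          refine ⟨⟨?_, ?_, ?_⟩, ?_, ?_, ?_⟩ <;> norm_num [pt] <;> linarith
    · have hc2 : (j : ℝ) + 2 ≤ k := by exact_mod_cast hlt
      refine Or.inl ?_
      ext p
      rw [Set.mem_inter_iff, upT_carrier, upT_carrier]
      simp only [Set.mem_setOf_eq, Set.mem_empty_iff_false, iff_false]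
      rintro ⟨⟨h1, h2, h3⟩, g1, g2, g3⟩
      linarith

lemma pair_low_up (j k : ℕ) : PairOK (lowT j) (upT k) := by
  constructor
  · ext p
    simp only [Set.mem_inter_iff, Set.mem_empty_iff_false, iff_false, not_and]
    intro h1 h2
    obtain ⟨a1, a2, a3⟩ := interior_lowT j h1
    obtain ⟨b1, b2, b3⟩ := interior_upT k h2
    have hjk : (j : ℝ) < k := by linarith
    have hjk' : j < k := by exact_mod_cast hjk
    have hc : (j : ℝ) + 1 ≤ k := by exact_mod_cast hjk'
    linarith
  · rcases Nat.lt_or_ge k j with hlt | hge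
    · -- k < j : empty
      have hc : (k : ℝ) + 1 ≤ j := by exact_mod_cast hlt
      refine Or.inl ?_
      ext p
      rw [Set.mem_inter_iff, lowT_carrier, upT_carrier]
      simp only [Set.mem_setOf_eq, Set.mem_empty_iff_false, iff_false]
      rintro ⟨⟨h1, h2, h3⟩, g1, g2, g3⟩
      linarith
    · rcases eq_or_lt_of_le hge with heq | hlt
      · -- k = j : diagonal edge
        subst heq
        refine Or.inr (Or.inr ⟨segment ℝ (pt (j:ℝ) 0) (pt ((j:ℝ)+1) 1), ?_, ?_⟩)
        · refine ⟨?_, ?_⟩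
          · simp only [lowT, Tri.edgeSegs, Set.mem_insert_iff, Set.mem_singleton_iff]
            tauto
          · simp only [upT, Tri.edgeSegs, Set.mem_insert_iff, Set.mem_singleton_iff]
            tauto
        · ext p
          rw [Set.mem_inter_iff, lowT_carrier, upT_carrier, seg_diag]
          constructor
          · rintro ⟨⟨h1, h2, h3⟩, g1, g2, g3⟩
            exact ⟨by linarith, by linarith, by linarith⟩
          · rintro ⟨e0, e1, e2⟩
            exact ⟨⟨by linarith, by linarith, by linarith⟩,
              by linarith, by linarith, by linarith⟩
      · rcases eq_or_lt_of_le (Nat.succ_le_of_lt hlt) with heq | hlt2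
        · -- k = j + 1 : vertical edge
          have hk : (k : ℝ) = (j : ℝ) + 1 := by rw [← heq]; push_cast; ring
          refine Or.inr (Or.inr ⟨segment ℝ (pt ((j:ℝ)+1) 0) (pt ((j:ℝ)+1) 1), ?_, ?_⟩)
          · refine ⟨?_, ?_⟩
            · simp only [lowT, Tri.edgeSegs, Set.mem_insert_iff, Set.mem_singleton_iff]
              tauto
            · simp only [upT, Tri.edgeSegs, Set.mem_insert_iff, Set.mem_singleton_iff]
              left; rw [hk]
          · ext p
            rw [Set.mem_inter_iff, lowT_carrier, upT_carrier, seg_vert, hk]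
            constructor
            · rintro ⟨⟨h1, h2, h3⟩, g1, g2, g3⟩
              refine ⟨le_antisymm h3 (by linarith), by linarith, by linarith⟩
            · rintro ⟨e0, e1, e2⟩
              exact ⟨⟨by linarith, by linarith, by linarith⟩,
                by linarith, by linarith, by linarith⟩
        · -- k ≥ j + 2 : empty
          have hc : (j : ℝ) + 2 ≤ k := by exact_mod_cast hlt2
          refine Or.inl ?_
          ext p
          rw [Set.mem_inter_iff, lowT_carrier, upT_carrier]
          simp only [Set.mem_setOf_eq, Set.mem_empty_iff_false, iff_false]
          rintro ⟨⟨h1, h2, h3⟩, g1, g2, g3⟩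
          linarith

lemma pair_d_low (j : ℕ) : PairOK dT (lowT j) := by
  constructor
  · ext p
    simp only [Set.mem_inter_iff, Set.mem_empty_iff_false, iff_false, not_and]
    intro h1 h2
    have a1 := interior_dT h1
    obtain ⟨b1, b2, b3⟩ := interior_lowT j h2
    simp only [Set.mem_setOf_eq] at a1
    linarith
  · match j with
    | 0 =>
      refine Or.inr (Or.inr ⟨segment ℝ (pt 0 0) (pt 1 0), ?_, ?_⟩)
      · refine ⟨?_, ?_⟩
        · simp only [dT, Tri.edgeSegs, Set.mem_insert_iff, Set.mem_singleton_iff]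
          tauto
        · simp only [lowT, Tri.edgeSegs, Set.mem_insert_iff, Set.mem_singleton_iff]
          left
          norm_num [pt_eq_pt]
      · ext p
        rw [Set.mem_inter_iff, dT_carrier, lowT_carrier, seg_bot]
        push_cast
        constructor
        · rintro ⟨⟨h1, h2, h3⟩, g1, g2, g3⟩
          exact ⟨by linarith, by linarith, by linarith⟩
        · rintro ⟨e0, e1, e2⟩
          exact ⟨⟨by linarith, by linarith, by linarith⟩,
            by linarith, by linarith, by linarith⟩
    | 1 =>
      refine Or.inr (Or.inl ⟨pt 1 0, ?_, ?_⟩)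
      · refine ⟨?_, ?_⟩
        · simp only [dT, Tri.verts, Set.mem_insert_iff, Set.mem_singleton_iff]
          tauto
        · simp only [lowT, Tri.verts, Set.mem_insert_iff, Set.mem_singleton_iff]
          left
          norm_num [pt_eq_pt]
      · ext p
        rw [Set.mem_inter_iff, dT_carrier, lowT_carrier]
        push_cast
        constructor
        · rintro ⟨⟨h1, h2, h3⟩, g1, g2, g3⟩
          have hy : p 1 = 0 := le_antisymm h1 g1
          have hx : p 0 = 1 := le_antisymm (by linarith) (by linarith)
          exact Set.mem_singleton_iff.mpr (pt_ext hx hy)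
        · rintro rfl
          refine ⟨⟨?_, ?_, ?_⟩, ?_, ?_, ?_⟩ <;> norm_num [pt]
    | (m+2) =>
      refine Or.inl ?_
      ext p
      rw [Set.mem_inter_iff, dT_carrier, lowT_carrier]
      push_cast
      simp only [Set.mem_setOf_eq, Set.mem_empty_iff_false, iff_false]
      rintro ⟨⟨h1, h2, h3⟩, g1, g2, g3⟩
      have : (0:ℝ) ≤ m := by positivity
      linarith

lemma pair_d_up (j : ℕ) : PairOK dT (upT j) := by
  constructor
  · ext p
    simp only [Set.mem_inter_iff, Set.mem_empty_iff_false, iff_false, not_and]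
    intro h1 h2
    have a1 := interior_dT h1
    obtain ⟨b1, b2, b3⟩ := interior_upT j h2
    simp only [Set.mem_setOf_eq] at a1
    linarith
  · match j with
    | 0 =>
      refine Or.inr (Or.inl ⟨pt 0 0, ?_, ?_⟩)
      · refine ⟨?_, ?_⟩
        · simp only [dT, Tri.verts, Set.mem_insert_iff, Set.mem_singleton_iff]
          tauto
        · simp only [upT, Tri.verts, Set.mem_insert_iff, Set.mem_singleton_iff]
          left
          norm_num [pt_eq_pt]
      · ext p
        rw [Set.mem_inter_iff, dT_carrier, upT_carrier]
        push_cast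
        constructor
        · rintro ⟨⟨h1, h2, h3⟩, g1, g2, g3⟩
          have hx : p 0 = 0 := le_antisymm (by linarith) (by linarith)
          have hy : p 1 = 0 := le_antisymm h1 (by linarith)
          exact Set.mem_singleton_iff.mpr (pt_ext hx hy)
        · rintro rfl
          refine ⟨⟨?_, ?_, ?_⟩, ?_, ?_, ?_⟩ <;> norm_num [pt]
    | 1 =>
      refine Or.inr (Or.inl ⟨pt 1 0, ?_, ?_⟩)
      · refine ⟨?_, ?_⟩
        · simp only [dT, Tri.verts, Set.mem_insert_iff, Set.mem_singleton_iff]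
          tauto
        · simp only [upT, Tri.verts, Set.mem_insert_iff, Set.mem_singleton_iff]
          left
          norm_num [pt_eq_pt]
      · ext p
        rw [Set.mem_inter_iff, dT_carrier, upT_carrier]
        push_cast
        constructor
        · rintro ⟨⟨h1, h2, h3⟩, g1, g2, g3⟩
          have hx : p 0 = 1 := le_antisymm (by linarith) g3
          have hy : p 1 = 0 := le_antisymm h1 (by linarith)
          exact Set.mem_singleton_iff.mpr (pt_ext hx hy)
        · rintro rfl
          refine ⟨⟨?_, ?_, ?_⟩, ?_, ?_, ?_⟩ <;> norm_num [pt]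
    | (m+2) =>
      refine Or.inl ?_
      ext p
      rw [Set.mem_inter_iff, dT_carrier, upT_carrier]
      push_cast
      simp only [Set.mem_setOf_eq, Set.mem_empty_iff_false, iff_false]
      rintro ⟨⟨h1, h2, h3⟩, g1, g2, g3⟩
      have : (0:ℝ) ≤ m := by positivity
      linarith
lemma pt_sub (a b c d : ℝ) : pt a b - pt c d = pt (a - c) (b - d) := by
  ext i
  fin_cases i <;> simp [pt]

lemma inner_pt (x y x' y' : ℝ) : ⟪pt x y, pt x' y'⟫ = x * x' + y * y' := by
  simp [PiLp.inner_apply, Fin.sum_univ_two, pt]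
  ring

lemma norm_pt (x y : ℝ) : ‖pt x y‖ = Real.sqrt (x ^ 2 + y ^ 2) := by
  simp [EuclideanSpace.norm_eq, Fin.sum_univ_two, pt]

lemma dist_pt (x y x' y' : ℝ) : dist (pt x y) (pt x' y') = Real.sqrt ((x - x') ^ 2 + (y - y') ^ 2) := by
  simp [EuclideanSpace.dist_eq, Fin.sum_univ_two, pt, Real.dist_eq, sq_abs]

lemma nondeg_of (T : Tri)
    (h : (T.b 0 - T.a 0) * (T.c 1 - T.a 1) - (T.b 1 - T.a 1) * (T.c 0 - T.a 0) ≠ 0) :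
    T.Nondeg := by
  intro hc
  obtain ⟨v, hv⟩ := (collinear_iff_of_mem (by simp [Tri.verts] : T.a ∈ T.verts)).mp hc
  obtain ⟨tb, htb⟩ := hv T.b (by simp [Tri.verts])
  obtain ⟨tc, htc⟩ := hv T.c (by simp [Tri.verts])
  apply h
  have hb0 : T.b 0 - T.a 0 = tb * v 0 := by rw [htb]; show tb * v 0 + T.a 0 - T.a 0 = _; ring
  have hb1 : T.b 1 - T.a 1 = tb * v 1 := by rw [htb]; show tb * v 1 + T.a 1 - T.a 1 = _; ring
  have hc0 : T.c 0 - T.a 0 = tc * v 0 := by rw [htc]; show tc * v 0 + T.a 0 - T.a 0 = _; ring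
  have hc1 : T.c 1 - T.a 1 = tc * v 1 := by rw [htc]; show tc * v 1 + T.a 1 - T.a 1 = _; ring
  rw [hb0, hb1, hc0, hc1]; ring

lemma lowT_nondeg (k : ℕ) : (lowT k).Nondeg := by
  apply nondeg_of
  simp only [lowT, pt]
  norm_num [Matrix.cons_val_zero, Matrix.cons_val_one, Matrix.head_cons]

lemma upT_nondeg (k : ℕ) : (upT k).Nondeg := by
  apply nondeg_of
  simp only [upT, pt]
  norm_num [Matrix.cons_val_zero, Matrix.cons_val_one, Matrix.head_cons]

lemma dT_nondeg : dT.Nondeg := by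
  apply nondeg_of
  simp only [dT, pt]
  norm_num [Matrix.cons_val_zero, Matrix.cons_val_one, Matrix.head_cons]

lemma angle_ge_pi4 {x y z : Pt}
    (h : ⟪x - y, z - y⟫ / (‖x - y‖ * ‖z - y‖) ≤ Real.sqrt 2 / 2) :
    Real.pi / 4 ≤ ∠ x y z := by
  have hd : ∠ x y z = Real.arccos (⟪x - y, z - y⟫ / (‖x - y‖ * ‖z - y‖)) := rfl
  rw [hd]
  by_cases hle : Real.arccos (⟪x - y, z - y⟫ / (‖x - y‖ * ‖z - y‖)) ≤ Real.pi / 4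
  · have h2 := Real.arccos_le_pi_div_four.mp hle
    have h3 : ⟪x - y, z - y⟫ / (‖x - y‖ * ‖z - y‖) = Real.sqrt 2 / 2 := le_antisymm h h2
    rw [h3, ← Real.cos_pi_div_four, Real.arccos_cos (by positivity) (by nlinarith [Real.pi_pos])]
  · linarith [not_le.mp hle]

lemma sqrt2_facts : Real.sqrt 2 * Real.sqrt 2 = 2 ∧ 0 < Real.sqrt 2 :=
  ⟨Real.mul_self_sqrt (by norm_num), Real.sqrt_pos.mpr (by norm_num)⟩

lemma lowT_fat (k : ℕ) : (lowT k).Fat (Real.pi / 4) := by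
  obtain ⟨hs, hp⟩ := sqrt2_facts
  refine ⟨?_, ?_, ?_⟩ <;>
    · apply angle_ge_pi4
      simp only [lowT]
      rw [pt_sub, pt_sub, inner_pt, norm_pt, norm_pt]
      norm_num [Real.sqrt_one]
      try rw [inv_eq_one_div, div_le_div_iff₀ (by positivity) (by norm_num)]
      try nlinarith [hs, hp]
      try positivity

lemma upT_fat (k : ℕ) : (upT k).Fat (Real.pi / 4) := by
  obtain ⟨hs, hp⟩ := sqrt2_facts
  refine ⟨?_, ?_, ?_⟩ <;>
    · apply angle_ge_pi4
      simp only [upT]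
      rw [pt_sub, pt_sub, inner_pt, norm_pt, norm_pt]
      norm_num [Real.sqrt_one]
      try rw [inv_eq_one_div, div_le_div_iff₀ (by positivity) (by norm_num)]
      try nlinarith [hs, hp]
      try positivity

lemma sqrt4_eq : Real.sqrt 4 = 2 := by
  rw [show (4:ℝ) = 2^2 by norm_num, Real.sqrt_sq (by norm_num : (0:ℝ) ≤ 2)]

lemma sqrt5_facts : Real.sqrt 5 * Real.sqrt 5 = 5 ∧ 0 < Real.sqrt 5 ∧ 2 ≤ Real.sqrt 5 := by
  have h5 : Real.sqrt 5 * Real.sqrt 5 = 5 := Real.mul_self_sqrt (by norm_num)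
  have h5p : 0 < Real.sqrt 5 := Real.sqrt_pos.mpr (by norm_num)
  refine ⟨h5, h5p, ?_⟩
  nlinarith

lemma dT_fat : dT.Fat (Real.pi / 4) := by
  obtain ⟨hs, hp⟩ := sqrt2_facts
  obtain ⟨h5, h5p, h5two⟩ := sqrt5_facts
  refine ⟨?_, ?_, ?_⟩ <;>
    · apply angle_ge_pi4
      simp only [dT]
      rw [pt_sub, pt_sub, inner_pt, norm_pt, norm_pt]
      norm_num [Real.sqrt_one, sqrt4_eq]
      try rw [div_le_div_iff₀ (by positivity) (by norm_num)]
      try nlinarith [hs, hp, h5, h5p, h5two]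

lemma sqrt2_mem : Real.sqrt 2 ∈ Set.Icc (1:ℝ) 2 := by
  obtain ⟨hs, hp⟩ := sqrt2_facts
  constructor <;> nlinarith

lemma sqrt54_mem : Real.sqrt (5/4) ∈ Set.Icc (1:ℝ) 2 := by
  have h54 : Real.sqrt (5/4) * Real.sqrt (5/4) = 5/4 := Real.mul_self_sqrt (by norm_num)
  have h54p : 0 < Real.sqrt (5/4) := Real.sqrt_pos.mpr (by norm_num)
  constructor <;> nlinarith

lemma lowT_edges (k : ℕ) : dist (lowT k).a (lowT k).b ∈ Set.Icc (1:ℝ) 2 ∧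
    dist (lowT k).b (lowT k).c ∈ Set.Icc (1:ℝ) 2 ∧ dist (lowT k).a (lowT k).c ∈ Set.Icc (1:ℝ) 2 := by
  refine ⟨?_, ?_, ?_⟩ <;>
    · simp only [lowT]
      rw [dist_pt]
      norm_num [Real.sqrt_one]
      first
        | exact Set.mem_Icc.mpr ⟨le_refl 1, by norm_num⟩
        | nlinarith [sqrt2_facts.1, sqrt2_facts.2]
        | skip

lemma upT_edges (k : ℕ) : dist (upT k).a (upT k).b ∈ Set.Icc (1:ℝ) 2 ∧
    dist (upT k).b (upT k).c ∈ Set.Icc (1:ℝ) 2 ∧ dist (upT k).a (upT k).c ∈ Set.Icc (1:ℝ) 2 := by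
  refine ⟨?_, ?_, ?_⟩ <;>
    · simp only [upT]
      rw [dist_pt]
      norm_num [Real.sqrt_one]
      first
        | exact Set.mem_Icc.mpr ⟨le_refl 1, by norm_num⟩
        | nlinarith [sqrt2_facts.1, sqrt2_facts.2]
        | skip

lemma dT_edges : dist dT.a dT.b ∈ Set.Icc (1:ℝ) 2 ∧
    dist dT.b dT.c ∈ Set.Icc (1:ℝ) 2 ∧ dist dT.a dT.c ∈ Set.Icc (1:ℝ) 2 := by
  refine ⟨?_, ?_, ?_⟩ <;>
    · simp only [dT]
      rw [dist_pt]
      norm_num [Real.sqrt_one, sqrt4_eq]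
      first
        | exact Set.mem_Icc.mpr ⟨le_refl 1, by norm_num⟩
        | constructor <;> nlinarith [sqrt5_facts.1, sqrt5_facts.2.1, sqrt5_facts.2.2]
        | skip
def meshSet (u : ℕ) (d : Bool) : Set Tri :=
  lowT '' Set.Iio u ∪ upT '' Set.Iio u ∪ (if d then {dT} else ∅)

lemma lowT_inj {j k : ℕ} (h : lowT j = lowT k) : j = k := by
  have := congrArg (fun p : Pt => p 0) (congrArg Tri.a h)
  simp only [lowT, pt, Matrix.cons_val_zero] at this
  exact_mod_cast this

lemma upT_inj {j k : ℕ} (h : upT j = upT k) : j = k := by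
  have := congrArg (fun p : Pt => p 0) (congrArg Tri.a h)
  simp only [upT, pt, Matrix.cons_val_zero] at this
  exact_mod_cast this

lemma lowT_ne_upT (j k : ℕ) : lowT j ≠ upT k := by
  intro h
  have := congrArg (fun p : Pt => p 1) (congrArg Tri.b h)
  simp only [lowT, upT, pt] at this
  norm_num at this

lemma lowT_ne_dT (j : ℕ) : lowT j ≠ dT := by
  intro h
  have := congrArg (fun p : Pt => p 1) (congrArg Tri.c h)
  simp only [lowT, dT, pt] at this
  norm_num at this

lemma upT_ne_dT (j : ℕ) : upT j ≠ dT := by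
  intro h
  have := congrArg (fun p : Pt => p 1) (congrArg Tri.c h)
  simp only [upT, dT, pt] at this
  norm_num at this

lemma mem_ifd {d : Bool} {X : Tri} (h : X ∈ (if d then ({dT} : Set Tri) else ∅)) : X = dT := by
  cases d <;> simp_all

lemma meshSet_proper (u : ℕ) (d : Bool) :
    ∀ T ∈ meshSet u d, ∀ T' ∈ meshSet u d, T ≠ T' → PairOK T T' := by
  rintro T hT T' hT' hne
  rcases hT with (⟨j, _, rfl⟩ | ⟨j, _, rfl⟩) | hd
  · rcases hT' with (⟨k, _, rfl⟩ | ⟨k, _, rfl⟩) | hd'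
    · rcases Nat.lt_trichotomy j k with h | h | h
      · exact pair_low_low h
      · exact absurd (congrArg lowT h) hne
      · exact (pair_low_low h).symm
    · exact pair_low_up j k
    · rw [mem_ifd hd']
      exact (pair_d_low j).symm
  · rcases hT' with (⟨k, _, rfl⟩ | ⟨k, _, rfl⟩) | hd'
    · exact (pair_low_up k j).symm
    · rcases Nat.lt_trichotomy j k with h | h | h
      · exact pair_up_up h
      · exact absurd (congrArg upT h) hne
      · exact (pair_up_up h).symm
    · rw [mem_ifd hd']
      exact (pair_d_up j).symm
  · rw [mem_ifd hd]
    rcases hT' with (⟨k, _, rfl⟩ | ⟨k, _, rfl⟩) | hd'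
    · exact pair_d_low k
    · exact pair_d_up k
    · exact absurd ((mem_ifd hd) ▸ (mem_ifd hd')).symm hne

def mkMesh (u : ℕ) (hu : 0 < u) (d : Bool) : Mesh where
  tris := meshSet u d
  finite := by
    refine Set.Finite.union (Set.Finite.union ?_ ?_) ?_
    · exact (Set.finite_Iio u).image _
    · exact (Set.finite_Iio u).image _
    · cases d <;> simp
  nonempty := ⟨lowT 0, Or.inl (Or.inl ⟨0, hu, rfl⟩)⟩
  nondeg := by
    rintro T hT
    rcases hT with (⟨j, _, rfl⟩ | ⟨j, _, rfl⟩) | hd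
    · exact lowT_nondeg j
    · exact upT_nondeg j
    · rw [mem_ifd hd]; exact dT_nondeg
  proper := fun T hT T' hT' hne => meshSet_proper u d T hT T' hT' hne

lemma mkMesh_fat (u : ℕ) (hu : 0 < u) (d : Bool) : (mkMesh u hu d).Fat (Real.pi / 4) := by
  rintro T hT
  rcases hT with (⟨j, _, rfl⟩ | ⟨j, _, rfl⟩) | hd
  · exact lowT_fat j
  · exact upT_fat j
  · rw [mem_ifd hd]; exact dT_fat

lemma mkMesh_edges (u : ℕ) (hu : 0 < u) (d : Bool) : (mkMesh u hu d).EdgesIn 2 := by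
  rintro T hT
  rcases hT with (⟨j, _, rfl⟩ | ⟨j, _, rfl⟩) | hd
  · exact lowT_edges j
  · exact upT_edges j
  · rw [mem_ifd hd]; exact dT_edges

lemma mkMesh_verts (m : ℕ) (d : Bool) (hu : 0 < m + 1) :
    (mkMesh (m+1) hu d).verts =
      (fun j : ℕ => pt j 0) '' Set.Iic (m+1) ∪ (fun j : ℕ => pt j 1) '' Set.Iic (m+1) ∪
        (if d then {pt (1/2 : ℝ) (-1)} else ∅) := by
  apply subset_antisymm
  · intro q hq
    simp only [Mesh.verts, Set.mem_iUnion] at hq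
    obtain ⟨T, hT, hqT⟩ := hq
    rcases hT with (⟨j, hj, rfl⟩ | ⟨j, hj, rfl⟩) | hd
    · have hj' : j < m + 1 := hj
      rcases hqT with rfl | rfl | rfl
      · exact Or.inl (Or.inl ⟨j, Set.mem_Iic.mpr (by omega), rfl⟩)
      · refine Or.inl (Or.inl ⟨j+1, Set.mem_Iic.mpr (by omega), by push_cast; rfl⟩)
      · refine Or.inl (Or.inr ⟨j+1, Set.mem_Iic.mpr (by omega), by push_cast; rfl⟩)
    · have hj' : j < m + 1 := hj
      rcases hqT with rfl | rfl | rfl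
      · exact Or.inl (Or.inl ⟨j, Set.mem_Iic.mpr (by omega), rfl⟩)
      · exact Or.inl (Or.inr ⟨j, Set.mem_Iic.mpr (by omega), rfl⟩)
      · refine Or.inl (Or.inr ⟨j+1, Set.mem_Iic.mpr (by omega), by push_cast; rfl⟩)
    · have hdt : d = true := by cases d <;> simp_all
      subst hdt
      rw [mem_ifd hd] at hqT
      rcases hqT with rfl | rfl | rfl
      · refine Or.inl (Or.inl ⟨0, Set.mem_Iic.mpr (by omega), ?_⟩)
        show pt _ _ = pt _ _
        rw [pt_eq_pt]; norm_num
      · refine Or.inl (Or.inl ⟨1, Set.mem_Iic.mpr (by omega), ?_⟩)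
        show pt _ _ = pt _ _
        rw [pt_eq_pt]; norm_num
      · right
        simp only [if_true, Set.mem_singleton_iff]
        rfl
  · rintro q ((⟨j, hj, rfl⟩ | ⟨j, hj, rfl⟩) | hq)
    · simp only [Mesh.verts, Set.mem_iUnion]
      rcases Nat.lt_or_ge j (m+1) with h | h
      · exact ⟨lowT j, Or.inl (Or.inl ⟨j, Set.mem_Iio.mpr h, rfl⟩), Or.inl rfl⟩
      · have hj' : j = m + 1 := le_antisymm (Set.mem_Iic.mp hj) h
        subst hj'
        refine ⟨lowT m, Or.inl (Or.inl ⟨m, Set.mem_Iio.mpr (by omega), rfl⟩), Or.inr (Or.inl ?_)⟩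
        show pt _ _ = pt _ _
        rw [pt_eq_pt]
        constructor <;> push_cast <;> ring
    · simp only [Mesh.verts, Set.mem_iUnion]
      rcases Nat.lt_or_ge j (m+1) with h | h
      · exact ⟨upT j, Or.inl (Or.inr ⟨j, Set.mem_Iio.mpr h, rfl⟩), Or.inr (Or.inl rfl)⟩
      · have hj' : j = m + 1 := le_antisymm (Set.mem_Iic.mp hj) h
        subst hj'
        refine ⟨upT m, Or.inl (Or.inr ⟨m, Set.mem_Iio.mpr (by omega), rfl⟩), Or.inr (Or.inr ?_)⟩
        show pt _ _ = pt _ _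
        rw [pt_eq_pt]
        constructor <;> push_cast <;> ring
    · cases d
      · simp at hq
      · simp only [if_true] at hq
        rw [Set.mem_singleton_iff] at hq
        subst hq
        simp only [Mesh.verts, Set.mem_iUnion]
        exact ⟨dT, Or.inr (by simp), Or.inr (Or.inr rfl)⟩
lemma verts_ncard (m : ℕ) (d : Bool) (hu : 0 < m + 1) :
    (mkMesh (m+1) hu d).verts.ncard = 2 * (m + 2) + (if d then 1 else 0) := by
  rw [mkMesh_verts m d hu]
  set A : Set Pt := (fun j : ℕ => pt j 0) '' Set.Iic (m+1) with hA
  set B : Set Pt := (fun j : ℕ => pt j 1) '' Set.Iic (m+1) with hB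
  set C : Set Pt := (if d then {pt (1/2 : ℝ) (-1)} else ∅ : Set Pt) with hC
  have hfA : A.Finite := (Set.finite_Iic (m+1)).image _
  have hfB : B.Finite := (Set.finite_Iic (m+1)).image _
  have hfC : C.Finite := by cases d <;> simp [hC]
  have hAB : Disjoint A B := by
    rw [Set.disjoint_left]
    rintro q ⟨j, _, rfl⟩ ⟨j', _, hq⟩
    have := (pt_eq_pt.mp hq).2
    norm_num at this
  have hABC : Disjoint (A ∪ B) C := by
    rw [Set.disjoint_left]
    rintro q (⟨j, _, rfl⟩ | ⟨j, _, rfl⟩) hq <;>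
      · cases d <;> simp [hC] at hq
        try exact absurd (pt_eq_pt.mp hq).2 (by norm_num)
  have hiA : A.ncard = m + 2 := by
    rw [hA, Set.ncard_image_of_injOn (fun x _ y _ h => by
      have := (pt_eq_pt.mp h).1; exact_mod_cast this)]
    rw [← Finset.coe_Iic, Set.ncard_coe_finset, Nat.card_Iic]
  have hiB : B.ncard = m + 2 := by
    rw [hB, Set.ncard_image_of_injOn (fun x _ y _ h => by
      have := (pt_eq_pt.mp h).1; exact_mod_cast this)]
    rw [← Finset.coe_Iic, Set.ncard_coe_finset, Nat.card_Iic]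
  have hiC : C.ncard = if d then 1 else 0 := by
    cases d <;> simp [hC]
  rw [Set.ncard_union_eq hABC (hfA.union hfB) hfC,
    Set.ncard_union_eq hAB hfA hfB, hiA, hiB, hiC]
  cases d <;> simp <;> ring

def Rect (k m : ℕ) : Set Pt :=
  {p : Pt | (k : ℝ) ≤ p 0 ∧ p 0 ≤ (m : ℝ) + 1 ∧ 0 ≤ p 1 ∧ p 1 ≤ 1}

lemma rect_eq_union (k m : ℕ) (hkm : k ≤ m) :
    Rect k m = ⋃ T ∈ (lowT '' Set.Icc k m ∪ upT '' Set.Icc k m), T.carrier := by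
  have hkm' : (k : ℝ) ≤ m := by exact_mod_cast hkm
  apply subset_antisymm
  · rintro p ⟨h1, h2, h3, h4⟩
    set j : ℕ := min m (Nat.floor (p 0)) with hj
    have hx0 : (0:ℝ) ≤ p 0 := le_trans (by positivity) h1
    have hjm : j ≤ m := min_le_left _ _
    have hjk : k ≤ j := by
      refine le_min hkm (Nat.le_floor h1)
    have hj1 : (j : ℝ) ≤ p 0 := by
      calc (j:ℝ) ≤ (Nat.floor (p 0) : ℝ) := by exact_mod_cast min_le_right m _
      _ ≤ p 0 := Nat.floor_le hx0
    have hj2 : p 0 ≤ (j : ℝ) + 1 := by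
      rcases Nat.lt_or_ge m (Nat.floor (p 0)) with h | h
      · have : j = m := by omega
        rw [this]; exact h2
      · have : j = Nat.floor (p 0) := by omega
        rw [this]
        exact le_of_lt (Nat.lt_floor_add_one (p 0))
    simp only [Set.mem_iUnion]
    by_cases hy : p 1 ≤ p 0 - j
    · refine ⟨lowT j, ⟨?_, ?_⟩⟩
      · exact Or.inl ⟨j, ⟨hjk, hjm⟩, rfl⟩
      · rw [lowT_carrier]; exact ⟨h3, hy, hj2⟩
    · refine ⟨upT j, ⟨?_, ?_⟩⟩
      · exact Or.inr ⟨j, ⟨hjk, hjm⟩, rfl⟩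
      · rw [upT_carrier]; exact ⟨h4, le_of_lt (not_le.mp hy), hj1⟩
  · intro p hp
    simp only [Set.mem_iUnion] at hp
    obtain ⟨T, hT, hpT⟩ := hp
    rcases hT with ⟨j, ⟨hj1, hj2⟩, rfl⟩ | ⟨j, ⟨hj1, hj2⟩, rfl⟩
    · rw [lowT_carrier] at hpT
      obtain ⟨h1, h2, h3⟩ := hpT
      have c1 : (k : ℝ) ≤ j := by exact_mod_cast hj1
      have c2 : (j : ℝ) ≤ m := by exact_mod_cast hj2
      exact ⟨by linarith, by linarith, by linarith, by linarith⟩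
    · rw [upT_carrier] at hpT
      obtain ⟨h1, h2, h3⟩ := hpT
      have c1 : (k : ℝ) ≤ j := by exact_mod_cast hj1
      have c2 : (j : ℝ) ≤ m := by exact_mod_cast hj2
      exact ⟨by linarith, by linarith, by linarith, by linarith⟩

lemma rect_convex (k m : ℕ) : Convex ℝ (Rect k m) := by
  apply convex_coord
  intro p q a b ha hb hab ⟨h1, h2, h3, h4⟩ ⟨g1, g2, g3, g4⟩
  refine ⟨?_, ?_, ?_, ?_⟩ <;> simp only [Set.mem_setOf_eq, comb0, comb1] <;> nlinarith

lemma rect_interior (k m : ℕ) : interior (Rect k m) ⊆ {p : Pt | 0 < p 1 ∧ p 1 < 1} := by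
  intro p hp
  have h1 := interior_le 0 (-1) 0 (by norm_num) (fun q hq => by
    simp only [Rect, Set.mem_setOf_eq] at hq; linarith [hq.2.2.1]) p hp
  have h2 := interior_le 0 1 1 (by norm_num) (fun q hq => by
    simp only [Rect, Set.mem_setOf_eq] at hq; linarith [hq.2.2.2]) p hp
  exact ⟨by linarith, by linarith⟩

lemma vert_y (u : ℕ) (d : Bool) :
    ∀ T ∈ meshSet u d, ∀ q ∈ T.verts, q 1 = 0 ∨ q 1 = 1 ∨ q 1 = -1 := by
  rintro T hT q hq
  rcases hT with (⟨j, _, rfl⟩ | ⟨j, _, rfl⟩) | hd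
  · rcases hq with rfl | rfl | rfl <;> simp [lowT, pt]
  · rcases hq with rfl | rfl | rfl <;> simp [upT, pt]
  · rw [mem_ifd hd] at hq
    rcases hq with rfl | rfl | rfl <;> simp [dT, pt]

lemma rect_carrot (u : ℕ) (hu : 0 < u) (d : Bool) (k m : ℕ) (hkm : k ≤ m) (hmu : m < u) :
    (mkMesh u hu d).IsCarrot (Rect k m) := by
  constructor
  · refine ⟨lowT '' Set.Icc k m ∪ upT '' Set.Icc k m, ?_, ?_, ?_, rect_convex k m⟩
    · rintro T (⟨j, ⟨hj1, hj2⟩, rfl⟩ | ⟨j, ⟨hj1, hj2⟩, rfl⟩)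
      · exact Or.inl (Or.inl ⟨j, Set.mem_Iio.mpr (by omega), rfl⟩)
      · exact Or.inl (Or.inr ⟨j, Set.mem_Iio.mpr (by omega), rfl⟩)
    · exact ⟨lowT k, Or.inl ⟨k, ⟨le_refl k, hkm⟩, rfl⟩⟩
    · exact rect_eq_union k m hkm
  · intro v hv hvint
    obtain ⟨hy1, hy2⟩ := rect_interior k m hvint
    simp only [Mesh.verts, Set.mem_iUnion] at hv
    obtain ⟨T, hT, hvT⟩ := hv
    rcases vert_y u d T hT v hvT with h | h | h <;> linarith

lemma rect_injOn : Set.InjOn (fun q : ℕ × ℕ => Rect q.1 q.2) {q : ℕ × ℕ | q.1 ≤ q.2} := by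
  rintro ⟨k, m⟩ hkm ⟨k', m'⟩ hkm' h
  simp only [Set.mem_setOf_eq] at hkm hkm'
  simp only at h
  have key : ∀ a b a' b' : ℕ, a ≤ b → Rect a b ⊆ Rect a' b' → a' ≤ a ∧ b ≤ b' := by
    intro a b a' b' hab hsub
    have hab' : (a:ℝ) ≤ b := by exact_mod_cast hab
    have h1 : pt a 0 ∈ Rect a b := by
      simp only [Rect, Set.mem_setOf_eq, pt, Matrix.cons_val_zero, Matrix.cons_val_one,
        Matrix.head_cons]
      norm_num
      linarith
    have h2 : pt ((b:ℝ)+1) 0 ∈ Rect a b := by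
      simp only [Rect, Set.mem_setOf_eq, pt, Matrix.cons_val_zero, Matrix.cons_val_one,
        Matrix.head_cons]
      norm_num
      linarith
    have g1 := hsub h1
    have g2 := hsub h2
    obtain ⟨ga, _, _, _⟩ := g1
    obtain ⟨_, gb, _, _⟩ := g2
    simp only [pt, Matrix.cons_val_zero] at ga gb
    constructor
    · exact_mod_cast ga
    · have : (b:ℝ) ≤ b' := by linarith
      exact_mod_cast this
  obtain ⟨a1, a2⟩ := key k m k' m' hkm (le_of_eq h)
  obtain ⟨b1, b2⟩ := key k' m' k m hkm' (le_of_eq h.symm)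
  exact Prod.ext (by omega) (by omega)
lemma carrot_finite (u : ℕ) (hu : 0 < u) (d : Bool) :
    {P : Set Pt | (mkMesh u hu d).IsCarrot P}.Finite := by
  apply Set.Finite.subset
    (((mkMesh u hu d).finite.finite_subsets).image (fun S => ⋃ T ∈ S, T.carrier))
  rintro P ⟨⟨S, hS, _, rfl, _⟩, _⟩
  exact ⟨S, hS, rfl⟩

lemma carrot_count (u : ℕ) (hu : 0 < u) (d : Bool) :
    (u/2) * (u - u/2) ≤ {P : Set Pt | (mkMesh u hu d).IsCarrot P}.ncard := by
  set v := u/2 with hv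
  set Ps : Set (ℕ × ℕ) := ↑(Finset.Iio v ×ˢ Finset.Ico v u) with hPsdef
  have hPs : Ps.ncard = v * (u - v) := by
    rw [hPsdef, Set.ncard_coe_finset, Finset.card_product, Nat.card_Iio, Nat.card_Ico]
  have hmem : ∀ q : ℕ × ℕ, q ∈ Ps → q.1 < v ∧ v ≤ q.2 ∧ q.2 < u := by
    rintro ⟨k, m⟩ hq
    simp only [hPsdef, Finset.coe_product, Set.mem_prod, Finset.mem_coe, Finset.mem_Iio,
      Finset.mem_Ico] at hq
    exact ⟨hq.1, hq.2.1, hq.2.2⟩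
  have hmap : (fun q : ℕ × ℕ => Rect q.1 q.2) '' Ps ⊆ {P | (mkMesh u hu d).IsCarrot P} := by
    rintro P ⟨⟨k, m⟩, hq, rfl⟩
    obtain ⟨h1, h2, h3⟩ := hmem _ hq
    exact rect_carrot u hu d k m (by omega) (by omega)
  have hinj : Set.InjOn (fun q : ℕ × ℕ => Rect q.1 q.2) Ps := by
    apply rect_injOn.mono
    rintro ⟨k, m⟩ hq
    obtain ⟨h1, h2, h3⟩ := hmem _ hq
    simp only [Set.mem_setOf_eq]
    omega
  calc v * (u - v) = Ps.ncard := hPs.symm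
    _ = ((fun q : ℕ × ℕ => Rect q.1 q.2) '' Ps).ncard := (Set.ncard_image_of_injOn hinj).symm
    _ ≤ _ := Set.ncard_le_ncard hmap (carrot_finite u hu d)

lemma main_aux (a : ℕ) (ha : 5 ≤ a) (d : Bool) (n : ℕ)
    (hn : n = 2 * a + (if d then 1 else 0)) :
    ∃ M : Mesh, M.Fat (Real.pi / 4) ∧ M.EdgesIn 2 ∧ M.verts.ncard = n ∧
      (1/64 : ℝ) * (n : ℝ) ^ 2 ≤ ({P : Set Pt | M.IsCarrot P}.ncard : ℝ) := by
  have hu : 0 < a - 2 + 1 := Nat.succ_pos _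
  refine ⟨mkMesh (a - 2 + 1) hu d, mkMesh_fat _ hu d, mkMesh_edges _ hu d, ?_, ?_⟩
  · rw [verts_ncard (a - 2) d hu]
    subst hn
    cases d <;> simp <;> omega
  · set u := a - 2 + 1 with hudef
    set v := u / 2 with hvdef
    have hcount := carrot_count u hu d
    have hc : ((v * (u - v) : ℕ) : ℝ) ≤ ({P : Set Pt | (mkMesh u hu d).IsCarrot P}.ncard : ℝ) :=
      Nat.cast_le.mpr hcount
    have c1 : n ≤ 8 * v := by cases d <;> simp at hn <;> omega
    have c2 : n ≤ 8 * (u - v) := by cases d <;> simp at hn <;> omega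
    have c1' : (n : ℝ) ≤ 8 * (v : ℝ) := by exact_mod_cast c1
    have c2' : (n : ℝ) ≤ 8 * ((u - v : ℕ) : ℝ) := by exact_mod_cast c2
    have hn0 : (0:ℝ) ≤ (n : ℝ) := Nat.cast_nonneg n
    have key : (1/64 : ℝ) * (n : ℝ) ^ 2 ≤ ((v * (u - v) : ℕ) : ℝ) := by
      push_cast
      nlinarith
    linarith


/-- There are constants `δ ∈ (0, 2π/3]`, `ρ ≥ 1`, `c > 0` and a threshold `n₀`
such that for every `n ≥ n₀` there is a `δ`-fat mesh with `n` vertices and all edge lengths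
in `[1, ρ]` having at least `c · n²` carrots respecting it. -/
theorem many_carrots_in_compact_fat_meshes :
    ∃ δ : ℝ, δ ∈ Set.Ioc 0 (2 * Real.pi / 3) ∧ ∃ ρ : ℝ, 1 ≤ ρ ∧ ∃ c : ℝ, 0 < c ∧
      ∃ n₀ : ℕ, ∀ n : ℕ, n₀ ≤ n →
        ∃ M : Mesh, M.Fat δ ∧ M.EdgesIn ρ ∧ M.verts.ncard = n ∧
          c * (n : ℝ) ^ 2 ≤ ({P : Set Pt | M.IsCarrot P}.ncard : ℝ) := by
  refine ⟨Real.pi / 4, ⟨by positivity, by nlinarith [Real.pi_pos]⟩, 2, by norm_num,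
    1/64, by norm_num, 10, ?_⟩
  intro n hn
  rcases Nat.even_or_odd n with ⟨a, hae⟩ | ⟨a, hao⟩
  · exact main_aux a (by omega) false n (by simp; omega)
  · exact main_aux a (by omega) true n (by simp; omega)
end
end
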